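/- arXiv:2507.03824 — 6 statements merged into one kernel-verified Lean document; each statement's English description precedes it below -/
import Mathlib

section
/- Let q be a primitive k-th root of unity and let b, z be complex numbers with b ≠ 0. Then ∑_{n=0}^{k-1} (b;q)_n z^n = b^{k-1} ∑_{n=0}^{k-1} (b;q)_n (q/z;q)_n (z/b)^n q^{-n²-n}, where (a;q)_n := ∏_{j=0}^{n-1}(1 - a q^j). -/
open Finset Polynomial

namespace LovejoyAux

/-- `(b;q)_n` -/
noncomputable def pn (b q : ℂ) (n : ℕ) : ℂ := ∏ j ∈ Finset.range n, (1 - b * q ^ j)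

/-- `(b;q)_n b^{-n} q^{-n^2-n}` -/
noncomputable def aa (b q : ℂ) (n : ℕ) : ℂ := pn b q n * (b ^ n)⁻¹ * (q ^ (n ^ 2 + n))⁻¹

lemma pn_succ (b q : ℂ) (n : ℕ) : pn b q (n + 1) = pn b q n * (1 - b * q ^ n) := by
  simp [pn, Finset.prod_range_succ]

lemma pn_zero (b q : ℂ) : pn b q 0 = 1 := by simp [pn]

lemma aa_zero (b q : ℂ) : aa b q 0 = 1 := by simp [aa, pn]

lemma aa_rec {b q : ℂ} (hb : b ≠ 0) (hq0 : q ≠ 0) (n : ℕ) :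
    aa b q (n + 1) * (b * q ^ (2 * n + 2)) = aa b q n * (1 - b * q ^ n) := by
  have h : (n + 1) ^ 2 + (n + 1) = (n ^ 2 + n) + (2 * n + 2) := by ring
  rw [aa, aa, pn_succ, h, pow_add, pow_succ]
  field_simp
  ring

/-- at a primitive k-th root of unity, `∏_{j<k} (z - q^j) = z^k - 1`. -/
lemma prod_sub {k : ℕ} {q : ℂ} (hq : IsPrimitiveRoot q k) (hk : 0 < k) (z : ℂ) :
    ∏ j ∈ Finset.range k, (z - q ^ j) = z ^ k - 1 := by
  have key : (∏ j ∈ Finset.range k, (X - C (q ^ j))) - (X ^ k - 1) = 0 := by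
    by_cases h0 : (∏ j ∈ Finset.range k, (X - C (q ^ j))) - (X ^ k - 1) = 0
    · exact h0
    apply Polynomial.eq_zero_of_natDegree_lt_card_of_eval_eq_zero _
      (f := fun i : Fin k => q ^ (i : ℕ))
    · intro i j hij
      exact Fin.ext (hq.pow_inj i.2 j.2 hij)
    · intro i
      have h1 : Polynomial.eval (q ^ (i : ℕ)) (∏ j ∈ Finset.range k, (X - C (q ^ j))) = 0 := by
        rw [Polynomial.eval_prod]
        apply Finset.prod_eq_zero (Finset.mem_range.2 i.2)
        simp
      have h2 : (q ^ (i : ℕ)) ^ k = 1 := by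
        rw [← pow_mul, mul_comm, pow_mul, hq.pow_eq_one, one_pow]
      rw [Polynomial.eval_sub, h1, Polynomial.eval_sub, Polynomial.eval_pow,
        Polynomial.eval_X, Polynomial.eval_one, h2, sub_self, zero_sub, neg_zero]
    · rw [Fintype.card_fin]
      have hm1 : ((∏ j ∈ Finset.range k, (X - C (q ^ j))) : ℂ[X]).Monic :=
        monic_prod_of_monic _ _ fun j _ => monic_X_sub_C _
      have hd1 : ((∏ j ∈ Finset.range k, (X - C (q ^ j))) : ℂ[X]).degree = k := by
        rw [Polynomial.degree_prod,
          Finset.sum_congr rfl (fun j _ => Polynomial.degree_X_sub_C (q ^ j))]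
        simp
      have hm2 : (X ^ k - 1 : ℂ[X]).Monic := by
        simpa using monic_X_pow_sub_C (1 : ℂ) hk.ne'
      have hd2 : ((X ^ k - 1 : ℂ[X])).degree = k := by
        simpa using Polynomial.degree_X_pow_sub_C hk (1 : ℂ)
      have hd := Polynomial.degree_sub_lt (hd1.trans hd2.symm) hm1.ne_zero
        (hm1.leadingCoeff.trans hm2.leadingCoeff.symm)
      rw [hd1] at hd
      exact (Polynomial.natDegree_lt_iff_degree_lt h0).2 hd
  have := congrArg (Polynomial.eval z) key
  simp only [Polynomial.eval_sub, Polynomial.eval_prod, Polynomial.eval_pow,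
    Polynomial.eval_X, Polynomial.eval_one, Polynomial.eval_C, Polynomial.eval_zero,
    sub_eq_zero] at this
  exact this

lemma pn_k {k : ℕ} {q b : ℂ} (hq : IsPrimitiveRoot q k) (hk : 0 < k) (hb : b ≠ 0) :
    pn b q k = 1 - b ^ k := by
  have h := prod_sub hq hk b⁻¹
  have h2 : ∀ j ∈ Finset.range k, (1 - b * q ^ j) = b * (b⁻¹ - q ^ j) := by
    intro j _
    field_simp
  rw [pn, Finset.prod_congr rfl h2, Finset.prod_mul_distrib, Finset.prod_const, h,
    Finset.card_range]
  field_simp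
  rw [one_div, inv_pow, mul_sub, mul_inv_cancel₀ (pow_ne_zero _ hb), mul_one]

/-- The polynomial whose evaluation at `z` is the LHS. -/
noncomputable def PP (k : ℕ) (q b : ℂ) : Polynomial ℂ :=
  ∑ n ∈ Finset.range k, C (pn b q n) * X ^ n

/-- The polynomial whose evaluation at `z` is the RHS (without the `b^(k-1)` factor). -/
noncomputable def SS (k : ℕ) (q b : ℂ) : Polynomial ℂ :=
  ∑ n ∈ Finset.range k, C (aa b q n) * ∏ j ∈ Finset.range n, (X - C (q ^ (j + 1)))

lemma evalPP (k : ℕ) (q b z : ℂ) :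
    (PP k q b).eval z = ∑ n ∈ Finset.range k, pn b q n * z ^ n := by
  simp [PP, Polynomial.eval_finset_sum]

lemma evalSS (k : ℕ) (q b z : ℂ) :
    (SS k q b).eval z = ∑ n ∈ Finset.range k, aa b q n *
      ∏ j ∈ Finset.range n, (z - q ^ (j + 1)) := by
  simp [SS, Polynomial.eval_finset_sum, Polynomial.eval_prod]

lemma FE_P {k : ℕ} {q b : ℂ} (hq : IsPrimitiveRoot q k) (hk : 0 < k) (hb : b ≠ 0) (z : ℂ) :
    b * z * (PP k q b).eval (q * z) =
      (z - 1) * (PP k q b).eval z + 1 - (1 - b ^ k) * z ^ k := by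
  rw [evalPP, evalPP, Finset.mul_sum]
  set f : ℕ → ℂ := fun n => pn b q n * z ^ n with hf
  have hterm : ∀ n ∈ Finset.range k, b * z * (pn b q n * (q * z) ^ n)
      = z * f n - f (n + 1) := by
    intro n _
    simp only [hf, pn_succ, mul_pow]
    ring
  rw [Finset.sum_congr rfl hterm, Finset.sum_sub_distrib, ← Finset.mul_sum]
  have h1 : ∑ n ∈ Finset.range k, f (n + 1) = (∑ n ∈ Finset.range k, f n) + f k - f 0 :=
    eq_sub_of_add_eq ((Finset.sum_range_succ' f k).symm.trans (Finset.sum_range_succ f k))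
  rw [h1]
  have h0 : f 0 = 1 := by simp [hf, pn_zero]
  have hfk : f k = (1 - b ^ k) * z ^ k := by
    show pn b q k * z ^ k = _
    rw [pn_k hq hk hb]
  rw [h0, hfk]
  ring

lemma FE_S {k : ℕ} {q b : ℂ} (hq : IsPrimitiveRoot q k) (hk : 0 < k) (hb : b ≠ 0) (z : ℂ) :
    b ^ (k - 1) * (b * z * (SS k q b).eval (q * z) - (z - 1) * (SS k q b).eval z) =
      1 - (1 - b ^ k) * z ^ k := by
  have hq0 : q ≠ 0 := hq.ne_zero hk.ne'
  have hqk : q ^ k = 1 := hq.pow_eq_one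
  obtain ⟨k', rfl⟩ := Nat.exists_eq_succ_of_ne_zero hk.ne'
  simp only [Nat.succ_eq_add_one] at *
  rw [evalSS, evalSS, Finset.mul_sum, Finset.mul_sum, ← Finset.sum_sub_distrib]
  -- the summand
  set w : ℕ → ℂ := fun n => aa b q n * (1 - b * q ^ n) *
    ∏ j ∈ Finset.range n, (z - q ^ (j + 1)) with hw
  have hstep : ∀ i,
      b * z * (aa b q (i + 1) * ∏ j ∈ Finset.range (i + 1), (q * z - q ^ (j + 1))) -
        (z - 1) * (aa b q (i + 1) * ∏ j ∈ Finset.range (i + 1), (z - q ^ (j + 1)))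
      = (z - 1) * (w i - w (i + 1)) := by
    intro i
    have hrq : ∏ j ∈ Finset.range (i + 1), (q * z - q ^ (j + 1))
        = q ^ (i + 1) * ((∏ j ∈ Finset.range i, (z - q ^ (j + 1))) * (z - 1)) := by
      have h1 : ∀ j ∈ Finset.range (i + 1), (q * z - q ^ (j + 1)) = q * (z - q ^ j) := by
        intro j _
        rw [pow_succ']
        ring
      rw [Finset.prod_congr rfl h1, Finset.prod_mul_distrib, Finset.prod_const,
        Finset.card_range, Finset.prod_range_succ' (fun j => (z - q ^ j)) i]
      norm_num
    rw [hrq, hw]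
    simp only []
    rw [Finset.prod_range_succ (fun j => (z - q ^ (j + 1))) i, ← aa_rec hb hq0 i]
    ring
  rw [Finset.sum_range_succ' _ k']
  have h0 : b * z * (aa b q 0 * ∏ j ∈ Finset.range 0, (q * z - q ^ (j + 1))) -
      (z - 1) * (aa b q 0 * ∏ j ∈ Finset.range 0, (z - q ^ (j + 1))) = b * z - (z - 1) := by
    simp [aa_zero]
  rw [Finset.sum_congr rfl (fun i _ => hstep i), h0, ← Finset.mul_sum,
    Finset.sum_range_sub' w k']
  have hw0 : w 0 = 1 - b := by simp [hw, aa_zero]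
  have hwk : w k' = (1 - b ^ (k' + 1)) * (b ^ (k' + 1))⁻¹ * b *
      ∏ j ∈ Finset.range k', (z - q ^ (j + 1)) := by
    simp only [hw]
    have h1 : aa b q k' * (1 - b * q ^ k') = aa b q (k' + 1) * (b * q ^ (2 * k' + 2)) :=
      (aa_rec hb hq0 k').symm
    have h2 : q ^ (2 * k' + 2) = 1 := by
      have : 2 * k' + 2 = (k' + 1) * 2 := by ring
      rw [this, pow_mul, hqk, one_pow]
    have h3 : aa b q (k' + 1) = (1 - b ^ (k' + 1)) * (b ^ (k' + 1))⁻¹ := by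
      rw [aa, pn_k hq hk hb]
      have h4 : (k' + 1) ^ 2 + (k' + 1) = (k' + 1) * (k' + 2) := by ring
      rw [h4, pow_mul, hqk, one_pow, inv_one, mul_one]
    rw [h1, h2, h3]
    ring
  have hzk : (z - 1) * ∏ j ∈ Finset.range k', (z - q ^ (j + 1)) = z ^ (k' + 1) - 1 := by
    have h5 := prod_sub hq hk z
    rw [Finset.prod_range_succ' (fun j => (z - q ^ j)) k'] at h5
    simp only [pow_zero] at h5
    rw [mul_comm]
    exact h5
  rw [hwk, hw0]
  have hexp : k' + 1 - 1 = k' := by omega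
  rw [hexp]
  have hbk : b ^ (k' + 1) ≠ 0 := pow_ne_zero _ hb
  have hinv : (b ^ (k' + 1)) * (b ^ (k' + 1))⁻¹ = 1 := mul_inv_cancel₀ hbk
  linear_combination (-(1 - b ^ (k' + 1)) * b ^ (k' + 1) * (b ^ (k' + 1))⁻¹) * hzk +
    (-(1 - b ^ (k' + 1)) * (z ^ (k' + 1) - 1)) * hinv

/-- the difference polynomial -/
noncomputable def DD (k : ℕ) (q b : ℂ) : Polynomial ℂ :=
  PP k q b - C (b ^ (k - 1)) * SS k q b

lemma FE_D {k : ℕ} {q b : ℂ} (hq : IsPrimitiveRoot q k) (hk : 0 < k) (hb : b ≠ 0) (z : ℂ) :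
    b * z * (DD k q b).eval (q * z) = (z - 1) * (DD k q b).eval z := by
  have h1 := FE_P hq hk hb z
  have h2 := FE_S hq hk hb z
  simp only [DD, Polynomial.eval_sub, Polynomial.eval_mul, Polynomial.eval_C]
  linear_combination h1 - h2

lemma D_root {k : ℕ} {q b : ℂ} (hq : IsPrimitiveRoot q k) (hk : 0 < k) (hb : b ≠ 0) :
    ∀ i : ℕ, (DD k q b).eval (q ^ (i + 1)) = 0 := by
  have hq0 : q ≠ 0 := hq.ne_zero hk.ne'
  intro i
  induction i with
  | zero =>
    have h := FE_D hq hk hb 1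
    simp only [mul_one, sub_self, zero_mul] at h
    have := mul_eq_zero.1 h
    rcases this with h' | h'
    · exact absurd h' hb
    · simpa using h'
  | succ i ih =>
    have h := FE_D hq hk hb (q ^ (i + 1))
    rw [ih, mul_zero, ← pow_succ'] at h
    rcases mul_eq_zero.1 h with h' | h'
    · rcases mul_eq_zero.1 h' with h'' | h''
      · exact absurd h'' hb
      · exact absurd h'' (pow_ne_zero _ hq0)
    · exact h'

lemma D_deg {k : ℕ} (q b : ℂ) (hk : 0 < k) : (DD k q b).natDegree < k := by
  have h1 : (PP k q b).natDegree ≤ k - 1 := by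
    apply Polynomial.natDegree_sum_le_of_forall_le
    intro n hn
    refine (Polynomial.natDegree_C_mul_le _ _).trans ?_
    rw [Polynomial.natDegree_X_pow]
    exact Nat.le_sub_one_of_lt (Finset.mem_range.1 hn)
  have h2 : (C (b ^ (k - 1)) * SS k q b).natDegree ≤ k - 1 := by
    refine (Polynomial.natDegree_C_mul_le _ _).trans ?_
    apply Polynomial.natDegree_sum_le_of_forall_le
    intro n hn
    refine (Polynomial.natDegree_C_mul_le _ _).trans ?_
    refine (Polynomial.natDegree_prod_le _ _).trans ?_
    calc ∑ j ∈ Finset.range n, (X - C (q ^ (j + 1))).natDegree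
        ≤ ∑ j ∈ Finset.range n, 1 := by
          apply Finset.sum_le_sum
          intro j _
          rw [Polynomial.natDegree_X_sub_C]
      _ = n := by simp
      _ ≤ k - 1 := Nat.le_sub_one_of_lt (Finset.mem_range.1 hn)
  calc (DD k q b).natDegree ≤ max (PP k q b).natDegree (C (b ^ (k - 1)) * SS k q b).natDegree :=
        Polynomial.natDegree_sub_le _ _
    _ ≤ k - 1 := max_le h1 h2
    _ < k := Nat.sub_lt hk one_pos

lemma D_zero {k : ℕ} {q b : ℂ} (hq : IsPrimitiveRoot q k) (hk : 0 < k) (hb : b ≠ 0) :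
    DD k q b = 0 := by
  apply Polynomial.eq_zero_of_natDegree_lt_card_of_eval_eq_zero _
    (f := fun i : Fin k => q ^ (i : ℕ))
  · intro i j hij
    exact Fin.ext (hq.pow_inj i.2 j.2 hij)
  · intro i
    rcases Nat.eq_zero_or_pos (i : ℕ) with h0 | h0
    · have h1 : (q : ℂ) ^ (i : ℕ) = q ^ ((k - 1) + 1) := by
        rw [h0, pow_zero]
        have : k - 1 + 1 = k := by omega
        rw [this, hq.pow_eq_one]
      rw [h1]
      exact D_root hq hk hb (k - 1)
    · obtain ⟨j, hj⟩ := Nat.exists_eq_succ_of_ne_zero h0.ne'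
      rw [hj]
      exact D_root hq hk hb j
  · rw [Fintype.card_fin]
    exact D_deg q b hk

end LovejoyAux

theorem lovejoy_polynomial_identity (k : ℕ) (q b z : ℂ)
    (hq : IsPrimitiveRoot q k) (hb : b ≠ 0) (hz : z ≠ 0) :
    ∑ n ∈ Finset.range k, (∏ j ∈ Finset.range n, (1 - b * q ^ j)) * z ^ n =
      b ^ (k - 1) * ∑ n ∈ Finset.range k,
        (∏ j ∈ Finset.range n, (1 - b * q ^ j)) *
        (∏ j ∈ Finset.range n, (1 - (q / z) * q ^ j)) *
        (z / b) ^ n * (q ^ (n ^ 2 + n))⁻¹ := by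
  rcases Nat.eq_zero_or_pos k with hk0 | hk
  · subst hk0; simp
  have hq0 : q ≠ 0 := hq.ne_zero hk.ne'
  have hD := LovejoyAux.D_zero hq hk hb
  have hPS : (LovejoyAux.PP k q b).eval z = b ^ (k - 1) * (LovejoyAux.SS k q b).eval z := by
    have := congrArg (Polynomial.eval z) hD
    simp only [LovejoyAux.DD, Polynomial.eval_sub, Polynomial.eval_mul, Polynomial.eval_C,
      Polynomial.eval_zero, sub_eq_zero] at this
    exact this
  rw [LovejoyAux.evalPP, LovejoyAux.evalSS] at hPS
  have hL : ∑ n ∈ Finset.range k, (∏ j ∈ Finset.range n, (1 - b * q ^ j)) * z ^ n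
      = ∑ n ∈ Finset.range k, LovejoyAux.pn b q n * z ^ n := rfl
  rw [hL, hPS]
  congr 1
  apply Finset.sum_congr rfl
  intro n _
  have hzp : (∏ j ∈ Finset.range n, (1 - q / z * q ^ j)) * z ^ n
      = ∏ j ∈ Finset.range n, (z - q ^ (j + 1)) := by
    have hzn : z ^ n = ∏ _j ∈ Finset.range n, z := by
      rw [Finset.prod_const, Finset.card_range]
    rw [hzn, ← Finset.prod_mul_distrib]
    apply Finset.prod_congr rfl
    intro j _
    field_simp
    ring
  have hdiv : (z / b) ^ n = z ^ n * (b ^ n)⁻¹ := by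
    rw [div_pow, div_eq_mul_inv]
  rw [LovejoyAux.aa, LovejoyAux.pn, hdiv, ← hzp]
  ring
end

section
/- Let q be a primitive k-th root of unity with k even, and let b be a nonzero complex number with b^k ≠ 1. Then ∑_{n=0}^{k-1} (b;q²)_n (-b^{-1}q²)^n = (1 + (-b^{-1})^{k/2}(1 - b^{k/2})) · ∑_{n=0}^{k/2 - 1} (b;q²)_n (-b^{-1}q²)^n, where (a;q²)_n := ∏_{j=0}^{n-1}(1 - a q^{2j}). -/
lemma prod_one_sub_prim (m : ℕ) (hm : 0 < m) (ζ b : ℂ) (h : IsPrimitiveRoot ζ m) :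
    ∏ j ∈ Finset.range m, (1 - b * ζ ^ j) = 1 - b ^ m := by
  have key := h.pow_sub_pow_eq_prod_sub_mul (x := (1:ℂ)) (y := b) hm
  rw [one_pow] at key
  rw [key]
  apply Finset.prod_nbij (fun i => ζ ^ i)
  · intro i _
    refine (Polynomial.mem_nthRootsFinset hm (1 : ℂ)).2 ?_
    rw [← pow_mul, mul_comm, pow_mul, h.pow_eq_one, one_pow]
  · intro i hi j hj hij
    exact h.pow_inj (Finset.mem_range.1 hi) (Finset.mem_range.1 hj) hij
  · intro μ hμ
    have : NeZero m := ⟨hm.ne'⟩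
    obtain ⟨i, hik, hi⟩ := h.eq_pow_of_pow_eq_one ((Polynomial.mem_nthRootsFinset hm (1 : ℂ)).1 hμ)
    exact ⟨i, Finset.mem_coe.2 (Finset.mem_range.2 hik), hi⟩
  · intro i _
    ring

theorem truncation_split (k : ℕ) (q b : ℂ)
    (hq : IsPrimitiveRoot q k) (hk : Even k) (hb : b ≠ 0) (hbk : b ^ k ≠ 1) :
    ∑ n ∈ Finset.range k,
        (∏ j ∈ Finset.range n, (1 - b * q ^ (2 * j))) * (-b⁻¹ * q ^ 2) ^ n =
      (1 + (-b⁻¹) ^ (k / 2) * (1 - b ^ (k / 2))) *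
        ∑ n ∈ Finset.range (k / 2),
          (∏ j ∈ Finset.range n, (1 - b * q ^ (2 * j))) * (-b⁻¹ * q ^ 2) ^ n := by
  have hk0 : k ≠ 0 := by
    rintro rfl
    exact hbk (pow_zero b)
  set m := k / 2 with hm
  have hkm : k = 2 * m := by
    have := Nat.div_mul_cancel hk.two_dvd
    omega
  have hm0 : 0 < m := by omega
  have hq2 : IsPrimitiveRoot (q ^ 2) m := hq.pow (Nat.pos_of_ne_zero hk0) hkm
  have hq2m : (q ^ 2) ^ m = 1 := hq2.pow_eq_one
  simp only [show ∀ j : ℕ, q ^ (2 * j) = (q ^ 2) ^ j from fun j => by rw [← pow_mul]]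
  have hPm : (∏ j ∈ Finset.range m, (1 - b * (q ^ 2) ^ j)) = 1 - b ^ m :=
    prod_one_sub_prim m hm0 (q ^ 2) b hq2
  have hsplit : k = m + m := by omega
  rw [hsplit, Finset.sum_range_add]
  have hshift : ∀ s : ℕ,
      (∏ j ∈ Finset.range (m + s), (1 - b * (q ^ 2) ^ j)) * (-b⁻¹ * q ^ 2) ^ (m + s)
      = ((-b⁻¹) ^ m * (1 - b ^ m)) *
        ((∏ j ∈ Finset.range s, (1 - b * (q ^ 2) ^ j)) * (-b⁻¹ * q ^ 2) ^ s) := by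
    intro s
    rw [Finset.prod_range_add]
    have h2 : ∀ j : ℕ, (1 - b * (q ^ 2) ^ (m + j)) = 1 - b * (q ^ 2) ^ j := by
      intro j
      rw [pow_add, hq2m, one_mul]
    rw [Finset.prod_congr rfl (fun j _ => h2 j), hPm]
    rw [pow_add, mul_pow (-b⁻¹) (q ^ 2) m, hq2m]
    ring
  rw [Finset.sum_congr rfl (fun s _ => hshift s), ← Finset.mul_sum]
  ring
end

section
/- As an identity of formal power series in q (equivalently, of holomorphic functions on |q|<1), Ramanujan's third order mock theta function ψ(q) := ∑_{n≥1} q^{n²}/(q;q²)_n equals ψ̃(q) := ∑_{n≥0} (-q²;q²)_n q^{n+1}, where (a;q²)_n := ∏_{j=0}^{n-1}(1 - a q^{2j}) and (q;q²)_n := ∏_{j=0}^{n-1}(1 - q^{2j+1}). -/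
set_option maxHeartbeats 2000000

open Finset

namespace PsiAlt

/-- weight of a pair (m, S): exponent m+1+Σ_{s∈S} 2(s+1) -/
def wt (p : ℕ × Finset ℕ) : ℕ := p.1 + 1 + ∑ s ∈ p.2, 2 * (s + 1)

/-- index set: pairs (m,S) with S ⊆ range m -/
abbrev P : Type := {p : ℕ × Finset ℕ // p.2 ⊆ Finset.range p.1}

abbrev fiberM (m : ℕ) : Type := {p : P // p.1.1 = m}

abbrev fiberC (n : ℕ) : Type := {p : P // p.1.2.card = n}

def fiberMEquiv (m : ℕ) : fiberM m ≃ {S : Finset ℕ // S ∈ (Finset.range m).powerset} where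
  toFun p := ⟨p.1.1.2, by
    rcases p with ⟨⟨⟨a, S⟩, hsub⟩, (rfl : a = m)⟩
    simpa [Finset.mem_powerset] using hsub⟩
  invFun S := ⟨⟨⟨m, S.1⟩, Finset.mem_powerset.1 S.2⟩, rfl⟩
  left_inv p := by
    rcases p with ⟨⟨⟨a, S⟩, hsub⟩, (rfl : a = m)⟩
    rfl
  right_inv S := rfl

instance (m : ℕ) : Finite (fiberM m) := Finite.of_equiv _ (fiberMEquiv m).symm

/-- sum over one m-fiber -/
lemma fiberM_tsum {K : Type*} [NormedField K] (x : K) (m : ℕ) :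
    ∑' p : fiberM m, x ^ wt p.1.1 =
      x ^ (m + 1) * ∏ j ∈ Finset.range m, (1 + x ^ (2 * (j + 1))) := by
  rw [← Equiv.tsum_eq (fiberMEquiv m).symm (fun p : fiberM m => x ^ wt p.1.1)]
  have h1 : ∀ S : {S : Finset ℕ // S ∈ (Finset.range m).powerset},
      x ^ wt (((fiberMEquiv m).symm S).1.1) = x ^ (wt (m, S.1)) := fun S => rfl
  simp only [h1]
  rw [show (fun S : {S : Finset ℕ // S ∈ (Finset.range m).powerset} => x ^ wt (m, S.1))
      = fun S => (fun T : Finset ℕ => x ^ wt (m, T)) S.1 from rfl]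
  rw [Finset.tsum_subtype ((Finset.range m).powerset) (fun T => x ^ wt (m, T))]
  have h2 : ∀ T : Finset ℕ, x ^ wt (m, T) = x ^ (m+1) * ∏ s ∈ T, x ^ (2 * (s+1)) := by
    intro T
    rw [Finset.prod_pow_eq_pow_sum, wt, pow_add]
  simp only [h2]
  rw [← Finset.mul_sum]
  congr 1
  have h3 : ∀ j ∈ Finset.range m, (1 + x ^ (2*(j+1))) = (x ^ (2*(j+1)) + 1) := fun j _ => add_comm _ _
  rw [Finset.prod_congr rfl h3, Finset.prod_add]
  simp


section Main
variable {q : ℂ} (hq : ‖q‖ < 1)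

/-- the global function -/
noncomputable def F (q : ℂ) (p : P) : ℂ := q ^ wt p.1

lemma norm_F (p : P) : ‖F q p‖ = ‖q‖ ^ wt p.1 := by simp [F]

include hq

lemma prod_bound (m : ℕ) :
    ∏ j ∈ Finset.range m, (1 + ‖q‖ ^ (2 * (j + 1))) ≤ Real.exp (1 - ‖q‖)⁻¹ := by
  have h0 : (0:ℝ) ≤ ‖q‖ := norm_nonneg q
  calc ∏ j ∈ Finset.range m, (1 + ‖q‖ ^ (2 * (j + 1)))
      ≤ ∏ j ∈ Finset.range m, Real.exp (‖q‖ ^ (2 * (j + 1))) := by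
        apply Finset.prod_le_prod
        · intro j _; positivity
        · intro j _
          have := Real.add_one_le_exp (‖q‖ ^ (2 * (j + 1)))
          linarith
    _ = Real.exp (∑ j ∈ Finset.range m, ‖q‖ ^ (2 * (j + 1))) := (Real.exp_sum _ _).symm
    _ ≤ Real.exp (1 - ‖q‖)⁻¹ := by
        apply Real.exp_le_exp.2
        calc ∑ j ∈ Finset.range m, ‖q‖ ^ (2 * (j + 1))
            ≤ ∑ j ∈ Finset.range m, ‖q‖ ^ j := by
              apply Finset.sum_le_sum
              intro j _
              exact pow_le_pow_of_le_one h0 hq.le (by omega)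
          _ ≤ ∑' j : ℕ, ‖q‖ ^ j := Summable.sum_le_tsum _ (fun i _ => by positivity)
                (summable_geometric_of_lt_one h0 hq)
          _ = (1 - ‖q‖)⁻¹ := tsum_geometric_of_lt_one h0 hq

set_option maxHeartbeats 1000000 in
lemma summable_F : Summable (F q) := by
  apply Summable.of_norm
  apply (Equiv.summable_iff (Equiv.sigmaFiberEquiv (fun p : P => p.1.1))).mp
  have hnf : ((fun p : P => ‖F q p‖) ∘ (Equiv.sigmaFiberEquiv (fun p : P => p.1.1)))
      = fun x : (m : ℕ) × fiberM m => ‖q‖ ^ wt x.2.1.1 := by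
    funext x
    simp [F, Equiv.sigmaFiberEquiv]
  rw [hnf]
  apply (summable_sigma_of_nonneg (fun x => pow_nonneg (norm_nonneg q) _)).2
  constructor
  · intro m
    exact Summable.of_finite
  · refine Summable.of_nonneg_of_le (f := fun m => Real.exp (1 - ‖q‖)⁻¹ * ‖q‖ ^ (m+1))
      (fun m => ?_) (fun m => ?_) ?_
    · exact tsum_nonneg (fun x => pow_nonneg (norm_nonneg q) _)
    · rw [fiberM_tsum, mul_comm]
      exact mul_le_mul_of_nonneg_right (prod_bound hq m) (by positivity)
    · have h0 : Summable (fun m : ℕ => ‖q‖ ^ m) := summable_geometric_of_lt_one (norm_nonneg q) hq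
      have h2 : Summable (fun m : ℕ => ‖q‖ ^ (m+1)) :=
        (h0.mul_left ‖q‖).congr (fun m => by rw [pow_succ, mul_comm])
      exact h2.mul_left _

set_option maxHeartbeats 2000000 in
lemma tsum_F_eq_RHS :
    ∑' p : P, F q p = ∑' m : ℕ, (∏ j ∈ Finset.range m, (1 + q ^ (2 * (j + 1)))) * q ^ (m + 1) := by
  rw [← Equiv.tsum_eq (Equiv.sigmaFiberEquiv fun p : P => p.1.1) (F q)]
  have hsum0 : Summable ((F q) ∘ (Equiv.sigmaFiberEquiv fun p : P => p.1.1)) :=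
    (Equiv.summable_iff _).2 (summable_F hq)
  have hsum : Summable (fun c : (y : ℕ) × fiberM y =>
      F q ((Equiv.sigmaFiberEquiv fun p : P => p.1.1) c)) := hsum0.congr (fun c => rfl)
  rw [Summable.tsum_sigma hsum]
  refine tsum_congr fun m => ?_
  have h1 : ∀ c : fiberM m,
      F q ((Equiv.sigmaFiberEquiv fun p : P => p.1.1) ⟨m, c⟩) = q ^ wt c.1.1 := fun c => rfl
  simp only [h1]
  exact (fiberM_tsum q m).trans (mul_comm _ _)

omit hq

lemma fiberC_ext {n : ℕ} {x y : fiberC n} (h : x.1.1 = y.1.1) : x = y :=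
  Subtype.ext (Subtype.ext h)

def fiberC0Equiv : fiberC 0 ≃ ℕ where
  toFun p := p.1.1.1
  invFun m := ⟨⟨⟨m, ∅⟩, by simp⟩, by simp⟩
  left_inv p := by
    rcases p with ⟨⟨⟨m, S⟩, hsub⟩, hcard⟩
    have hS : S = ∅ := Finset.card_eq_zero.mp hcard
    subst hS
    rfl
  right_inv m := rfl

def shift (n : ℕ) (x : ℕ × fiberC n) : fiberC (n+1) :=
  ⟨⟨⟨x.2.1.1.1 + x.1 + 1, insert x.1 (x.2.1.1.2.image (· + (x.1 + 1)))⟩, by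
      obtain ⟨k, ⟨⟨⟨m, S⟩, hsub⟩, hcard⟩⟩ := x
      intro a ha
      simp only [Finset.mem_insert, Finset.mem_image] at ha
      rcases ha with rfl | ⟨s, hs, rfl⟩
      · simp only [Finset.mem_range]; omega
      · have := Finset.mem_range.mp (hsub hs)
        simp only [Finset.mem_range]; omega⟩, by
      obtain ⟨k, ⟨⟨⟨m, S⟩, hsub⟩, hcard⟩⟩ := x
      simp only
      rw [Finset.card_insert_of_notMem (by
        simp only [Finset.mem_image]
        rintro ⟨s, _, h⟩
        omega), Finset.card_image_of_injective _ (add_left_injective (k+1)), hcard]⟩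

lemma shift_nonempty {n : ℕ} (y : fiberC (n+1)) : y.1.1.2.Nonempty :=
  Finset.card_pos.mp (by rw [y.2]; omega)

noncomputable def unshift (n : ℕ) (y : fiberC (n+1)) : ℕ × fiberC n :=
  (y.1.1.2.min' (shift_nonempty y),
    ⟨⟨⟨y.1.1.1 - (y.1.1.2.min' (shift_nonempty y) + 1),
      (y.1.1.2.erase (y.1.1.2.min' (shift_nonempty y))).image
        (· - (y.1.1.2.min' (shift_nonempty y) + 1))⟩, by
      intro a ha
      simp only [Finset.mem_image, Finset.mem_erase] at ha
      obtain ⟨s, ⟨hsk, hs⟩, rfl⟩ := ha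
      have h1 : y.1.1.2.min' (shift_nonempty y) ≤ s := Finset.min'_le _ _ hs
      have h2 : s < y.1.1.1 := Finset.mem_range.mp (y.1.2 hs)
      simp only [Finset.mem_range]
      omega⟩, by
      simp only
      have hinj : Set.InjOn (· - (y.1.1.2.min' (shift_nonempty y) + 1))
          (y.1.1.2.erase (y.1.1.2.min' (shift_nonempty y))) := by
        intro a ha b hb hab
        simp only [Finset.coe_erase, Set.mem_diff, Finset.mem_coe, Set.mem_singleton_iff] at ha hb
        have h1 : y.1.1.2.min' (shift_nonempty y) ≤ a := Finset.min'_le _ _ ha.1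
        have h2 : y.1.1.2.min' (shift_nonempty y) ≤ b := Finset.min'_le _ _ hb.1
        simp only at hab
        omega
      rw [Finset.card_image_of_injOn hinj, Finset.card_erase_of_mem
        (Finset.min'_mem _ (shift_nonempty y)), y.2]
      omega⟩)

noncomputable def shiftEquiv (n : ℕ) : ℕ × fiberC n ≃ fiberC (n+1) where
  toFun := shift n
  invFun := unshift n
  left_inv x := by
    obtain ⟨k, ⟨⟨⟨m, S⟩, hsub⟩, hcard⟩⟩ := x
    have hknotmem : k ∉ S.image (· + (k + 1)) := by
      simp only [Finset.mem_image]
      rintro ⟨s, _, h⟩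
      omega
    have hmin : (insert k (S.image (· + (k + 1)))).min'
        (shift_nonempty (shift n (k, ⟨⟨⟨m, S⟩, hsub⟩, hcard⟩))) = k := by
      apply le_antisymm
      · exact Finset.min'_le _ _ (Finset.mem_insert_self _ _)
      · apply Finset.le_min'
        intro a ha
        simp only [Finset.mem_insert, Finset.mem_image] at ha
        rcases ha with rfl | ⟨s, _, rfl⟩ <;> omega
    unfold unshift shift
    simp only [hmin]
    refine Prod.ext rfl (fiberC_ext ?_)
    simp only
    rw [Finset.erase_insert hknotmem, Finset.image_image]
    refine Prod.ext (by simp) ?_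
    simp only
    have : S.image ((· - (k + 1)) ∘ (· + (k + 1))) = S.image id := by
      apply Finset.image_congr
      intro a _
      simp
    rw [this, Finset.image_id]
  right_inv y := by
    obtain ⟨⟨⟨m, S⟩, hsub⟩, hcard⟩ := y
    apply fiberC_ext
    set k := S.min' (shift_nonempty ⟨⟨⟨m, S⟩, hsub⟩, hcard⟩) with hk
    have hkS : k ∈ S := Finset.min'_mem _ _
    have hkm : k < m := Finset.mem_range.mp (hsub hkS)
    unfold shift unshift
    simp only [← hk]
    refine Prod.ext (by simp; omega) ?_
    simp only
    have h1 : ((S.erase k).image (· - (k + 1))).image (· + (k + 1)) = S.erase k := by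
      rw [Finset.image_image]
      have : (S.erase k).image ((· + (k + 1)) ∘ (· - (k + 1))) = (S.erase k).image id := by
        apply Finset.image_congr
        intro a ha
        simp only [Finset.mem_coe, Finset.mem_erase] at ha
        have : k ≤ a := Finset.min'_le _ _ ha.2
        have : k < a := lt_of_le_of_ne this (Ne.symm ha.1)
        simp only [Function.comp_apply, id]
        omega
      rw [this, Finset.image_id]
    rw [h1, Finset.insert_erase hkS]

lemma wt_shift (n : ℕ) (x : ℕ × fiberC n) :
    wt ((shift n x).1.1) = wt x.2.1.1 + (2*n+3)*(x.1+1) := by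
  obtain ⟨k, ⟨⟨⟨m, S⟩, hsub⟩, hcard⟩⟩ := x
  unfold shift wt
  simp only
  rw [Finset.sum_insert (by simp only [Finset.mem_image]; rintro ⟨s, _, h⟩; omega),
    Finset.sum_image (fun a _ b _ h => by omega)]
  have h2 : ∑ s ∈ S, 2 * (s + (k+1) + 1) = ∑ s ∈ S, (2*(s+1) + 2*(k+1)) :=
    Finset.sum_congr rfl (fun s _ => by ring)
  rw [h2, Finset.sum_add_distrib, Finset.sum_const, hcard, smul_eq_mul]
  ring

lemma F_shift (n : ℕ) (x : ℕ × fiberC n) :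
    F q ((shift n x).1) = q ^ ((2*n+3)*(x.1+1)) * F q x.2.1 := by
  rw [F, F, wt_shift, pow_add, mul_comm]

noncomputable def cc (q : ℂ) (n : ℕ) : ℂ := ∑' x : fiberC n, F q x.1

include hq

lemma summable_fiberC (n : ℕ) : Summable (fun x : fiberC n => F q x.1) :=
  (summable_F hq).comp_injective Subtype.val_injective

lemma norm_pow_lt_one {j : ℕ} (hj : j ≠ 0) : ‖q ^ j‖ < 1 := by
  rw [norm_pow]
  exact pow_lt_one₀ (norm_nonneg q) hq hj

lemma one_sub_pow_ne {j : ℕ} (hj : j ≠ 0) : 1 - q ^ j ≠ 0 := by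
  intro h
  have h1 : q ^ j = 1 := (sub_eq_zero.mp h).symm
  have h2 := norm_pow_lt_one hq hj
  rw [h1] at h2
  simp at h2

lemma cc_zero : cc q 0 = q * (1 - q)⁻¹ := by
  rw [cc, ← Equiv.tsum_eq fiberC0Equiv.symm (fun x : fiberC 0 => F q x.1)]
  have h : ∀ m : ℕ, F q ((fiberC0Equiv.symm m)).1 = q * q ^ m := by
    intro m
    show q ^ wt (m, ∅) = q * q ^ m
    rw [wt]
    simp [pow_succ, mul_comm]
  simp only [h]
  rw [tsum_mul_left, tsum_geometric_of_norm_lt_one hq]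

lemma cc_succ (n : ℕ) : cc q (n+1) = (q^(2*n+3) * (1 - q^(2*n+3))⁻¹) * cc q n := by
  have hrestr : Summable (fun y : fiberC (n+1) => F q y.1) := summable_fiberC hq (n+1)
  have hfun : (fun x : ℕ × fiberC n => F q ((shiftEquiv n x)).1)
      = fun x => q ^ ((2*n+3)*(x.1+1)) * F q x.2.1 := funext (fun x => F_shift n x)
  have hcomp0 : Summable ((fun y : fiberC (n+1) => F q y.1) ∘ (shiftEquiv n)) :=
    (Equiv.summable_iff (shiftEquiv n)).2 hrestr
  have hcomp : Summable (fun x : ℕ × fiberC n => q ^ ((2*n+3)*(x.1+1)) * F q x.2.1) :=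
    hcomp0.congr (fun x => F_shift n x)
  rw [cc, ← Equiv.tsum_eq (shiftEquiv n) (fun y : fiberC (n+1) => F q y.1)]
  rw [show (fun x : ℕ × fiberC n => F q ((shiftEquiv n) x).1)
      = fun x => q ^ ((2*n+3)*(x.1+1)) * F q x.2.1 from hfun]
  rw [Summable.tsum_prod hcomp]
  simp only [tsum_mul_left]
  rw [tsum_mul_right]
  congr 1
  have hgeom : ∀ k : ℕ, q ^ ((2*n+3)*(k+1)) = q^(2*n+3) * (q^(2*n+3))^k := by
    intro k
    rw [← pow_mul, ← pow_add]
    congr 1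
    ring
  simp only [hgeom]
  rw [tsum_mul_left, tsum_geometric_of_norm_lt_one (norm_pow_lt_one hq (by omega))]

lemma cc_eq (n : ℕ) :
    cc q n = q ^ ((n + 1) ^ 2) / ∏ j ∈ Finset.range (n + 1), (1 - q ^ (2 * j + 1)) := by
  induction n with
  | zero =>
    rw [cc_zero hq]
    simp [Finset.prod_range_one, div_eq_mul_inv]
  | succ n ih =>
    rw [cc_succ hq, ih, Finset.prod_range_succ (fun j => 1 - q ^ (2 * j + 1)) (n+1)]
    have hd : (1 : ℂ) - q ^ (2*n+3) ≠ 0 := one_sub_pow_ne hq (by omega)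
    have hD : (∏ j ∈ Finset.range (n + 1), (1 - q ^ (2 * j + 1))) ≠ 0 :=
      Finset.prod_ne_zero_iff.2 (fun j _ => one_sub_pow_ne hq (by omega))
    have he : 2 * (n + 1) + 1 = 2*n+3 := by ring
    rw [he]
    have h1 : q^(2*n+3) * q^((n+1)^2) = q^((n+1+1)^2) := by
      rw [← pow_add]
      congr 1
      ring
    field_simp
    rw [← h1]

lemma tsum_F_eq_sum_cc : ∑' p : P, F q p = ∑' n : ℕ, cc q n := by
  rw [← Equiv.tsum_eq (Equiv.sigmaFiberEquiv fun p : P => p.1.2.card) (F q)]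
  have hsum0 : Summable ((F q) ∘ (Equiv.sigmaFiberEquiv fun p : P => p.1.2.card)) :=
    (Equiv.summable_iff _).2 (summable_F hq)
  have hsum : Summable (fun c : (n : ℕ) × fiberC n =>
      F q ((Equiv.sigmaFiberEquiv fun p : P => p.1.2.card) c)) := hsum0.congr (fun c => rfl)
  rw [Summable.tsum_sigma hsum]
  refine tsum_congr fun n => ?_
  have h1 : ∀ c : fiberC n,
      F q ((Equiv.sigmaFiberEquiv fun p : P => p.1.2.card) ⟨n, c⟩) = F q c.1 := fun c => rfl
  simp only [h1]
  rfl

end Main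

theorem main (q : ℂ) (hq : ‖q‖ < 1) :
    ∑' n : ℕ, q ^ ((n + 1) ^ 2) / ∏ j ∈ Finset.range (n + 1), (1 - q ^ (2 * j + 1)) =
      ∑' n : ℕ, (∏ j ∈ Finset.range n, (1 + q ^ (2 * (j + 1)))) * q ^ (n + 1) := by
  have h1 : ∑' n : ℕ, q ^ ((n + 1) ^ 2) / ∏ j ∈ Finset.range (n + 1), (1 - q ^ (2 * j + 1))
      = ∑' n : ℕ, PsiAlt.cc q n := tsum_congr fun n => (cc_eq hq n).symm
  rw [h1, ← tsum_F_eq_sum_cc hq, tsum_F_eq_RHS hq]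

end PsiAlt

theorem psi_alternate_representation (q : ℂ) (hq : ‖q‖ < 1) :
    ∑' n : ℕ, q ^ ((n + 1) ^ 2) / ∏ j ∈ Finset.range (n + 1), (1 - q ^ (2 * j + 1)) =
      ∑' n : ℕ, (∏ j ∈ Finset.range n, (1 + q ^ (2 * (j + 1)))) * q ^ (n + 1) :=
  PsiAlt.main q hq
end

section
/- As an identity of formal power series in q (equivalently, for |q|<1), Ramanujan's third order mock theta function φ(q) := ∑_{n≥0} q^{n²}/(-q²;q²)_n equals φ̃(q) := 1 + ∑_{n≥0} (q;q²)_n (-1)^n q^{2n+1}. -/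
open Finset


noncomputable def gb (Q : ℂ) : ℕ → ℕ → ℂ
  | 0, 0 => 1
  | 0, _+1 => 0
  | _+1, 0 => 1
  | n+1, k+1 => gb Q n (k+1) + Q^(n-k) * gb Q n k

lemma gb_zero_right (Q : ℂ) (n : ℕ) : gb Q n 0 = 1 := by cases n <;> rfl

lemma gb_succ_succ (Q : ℂ) (n k : ℕ) :
    gb Q (n+1) (k+1) = gb Q n (k+1) + Q^(n-k) * gb Q n k := rfl

lemma gb_eq_zero (Q : ℂ) : ∀ n k : ℕ, n < k → gb Q n k = 0 := by
  intro n
  induction n with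
  | zero =>
    intro k hk
    match k, hk with
    | k+1, _ => rfl
  | succ n ih =>
    intro k hk
    match k, hk with
    | k+1, hk =>
      rw [gb_succ_succ, ih (k+1) (by omega), ih k (by omega), mul_zero, add_zero]

lemma gb_succ_eq_sum (Q : ℂ) (k : ℕ) :
    ∀ n, gb Q n (k+1) = ∑ i ∈ range (n - k), Q^i * gb Q (i+k) k := by
  intro n
  induction n with
  | zero => simp [gb]
  | succ n ih =>
    rcases le_or_gt k n with h | h
    · have h1 : n + 1 - k = (n - k) + 1 := by omega
      rw [gb_succ_succ, h1, Finset.sum_range_succ, ih]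
      have h2 : n - k + k = n := by omega
      rw [h2]
    · rw [gb_eq_zero Q (n+1) (k+1) (by omega)]
      have h1 : n + 1 - k = 0 := by omega
      rw [h1]
      simp

lemma gb_norm_le (Q : ℂ) (hQ : ‖Q‖ < 1) : ∀ (k n : ℕ), ‖gb Q n k‖ ≤ (1 - ‖Q‖)⁻¹ ^ k := by
  intro k
  induction k with
  | zero => intro n; rw [gb_zero_right]; simp
  | succ k ih =>
    intro n
    rw [gb_succ_eq_sum]
    have h1 : ∀ i ∈ range (n - k), ‖Q^i * gb Q (i+k) k‖ ≤ ‖Q‖^i * (1 - ‖Q‖)⁻¹ ^ k := by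
      intro i _
      rw [norm_mul, norm_pow]
      have h0 : (0:ℝ) ≤ 1 - ‖Q‖ := by linarith
      exact mul_le_mul_of_nonneg_left (ih _) (by positivity)
    calc ‖∑ i ∈ range (n-k), Q^i * gb Q (i+k) k‖
        ≤ ∑ i ∈ range (n-k), ‖Q^i * gb Q (i+k) k‖ := norm_sum_le _ _
      _ ≤ ∑ i ∈ range (n-k), ‖Q‖^i * (1 - ‖Q‖)⁻¹ ^ k := Finset.sum_le_sum h1
      _ = (∑ i ∈ range (n-k), ‖Q‖^i) * (1 - ‖Q‖)⁻¹ ^ k := by rw [Finset.sum_mul]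
      _ ≤ (1 - ‖Q‖)⁻¹ * (1 - ‖Q‖)⁻¹ ^ k := by
          have h0 : (0:ℝ) ≤ 1 - ‖Q‖ := by linarith
          apply mul_le_mul_of_nonneg_right _ (by positivity)
          calc (∑ i ∈ range (n-k), ‖Q‖^i)
              ≤ ∑' i : ℕ, ‖Q‖^i :=
                Summable.sum_le_tsum _ (fun i _ => by positivity)
                  (summable_geometric_of_lt_one (norm_nonneg _) hQ)
            _ = (1 - ‖Q‖)⁻¹ := tsum_geometric_of_lt_one (norm_nonneg _) hQ
      _ = (1 - ‖Q‖)⁻¹ ^ (k+1) := by rw [pow_succ]; ring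

lemma stepA (q : ℂ) (n : ℕ) :
    ∏ j ∈ range n, (1 - q^(2*j+1)) =
      ∑ k ∈ range (n+1), (-1)^k * q^(k^2) * gb (q^2) n k := by
  induction n with
  | zero => simp [gb_zero_right]
  | succ n ih =>
    rw [Finset.prod_range_succ, ih]
    rw [Finset.sum_range_succ' (fun k => (-1:ℂ)^k * q^(k^2) * gb (q^2) (n+1) k) (n+1)]
    have key : ∀ k ∈ range (n+1),
        (-1:ℂ)^(k+1) * q^((k+1)^2) * gb (q^2) (n+1) (k+1)
          = (-1)^(k+1) * q^((k+1)^2) * gb (q^2) n (k+1)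
            + (-q^(2*n+1)) * ((-1)^k * q^(k^2) * gb (q^2) n k) := by
      intro k hk
      rw [Finset.mem_range] at hk
      rw [gb_succ_succ, mul_add]
      congr 1
      have he : (k+1)^2 + 2*(n-k) = 2*n+1 + k^2 := by
        have h2 : (k+1)^2 = k^2+2*k+1 := by ring
        omega
      have hqe : q^((k+1)^2) * (q^2)^(n-k) = q^(2*n+1) * q^(k^2) := by
        rw [← pow_mul, ← pow_add, ← pow_add, he]
      calc (-1:ℂ)^(k+1) * q^((k+1)^2) * ((q^2)^(n-k) * gb (q^2) n k)
          = ((-1)^k * gb (q^2) n k) * (-(q^((k+1)^2) * (q^2)^(n-k))) := by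
            rw [pow_succ]; ring
        _ = ((-1)^k * gb (q^2) n k) * (-(q^(2*n+1) * q^(k^2))) := by rw [hqe]
        _ = -q^(2*n+1) * ((-1)^k * q^(k^2) * gb (q^2) n k) := by ring
    rw [Finset.sum_congr rfl key, Finset.sum_add_distrib, ← Finset.mul_sum]
    have h0 : ((-1:ℂ))^0 * q^(0^2) * gb (q^2) (n+1) 0 = 1 := by
      rw [gb_zero_right]; norm_num
    rw [h0]
    have htop : ∑ k ∈ range (n+1), (-1:ℂ)^(k+1) * q^((k+1)^2) * gb (q^2) n (k+1)
        = ∑ k ∈ range n, (-1:ℂ)^(k+1) * q^((k+1)^2) * gb (q^2) n (k+1) := by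
      rw [Finset.sum_range_succ, gb_eq_zero (q^2) n (n+1) (by omega), mul_zero, add_zero]
    rw [htop]
    have hP : ∑ k ∈ range (n+1), (-1:ℂ)^k * q^(k^2) * gb (q^2) n k
        = (∑ k ∈ range n, (-1:ℂ)^(k+1) * q^((k+1)^2) * gb (q^2) n (k+1)) + 1 := by
      rw [Finset.sum_range_succ' (fun k => (-1:ℂ)^k * q^(k^2) * gb (q^2) n k) n]
      rw [gb_zero_right]; norm_num
    rw [hP]
    ring

lemma summable_aux (Q t : ℂ) (hQ : ‖Q‖ < 1) (ht : ‖t‖ < 1) (j k : ℕ) :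
    Summable (fun m : ℕ => t^m * gb Q (m+j) k) := by
  apply Summable.of_norm_bounded (g := fun m : ℕ => ‖t‖^m * (1 - ‖Q‖)⁻¹ ^ k)
  · exact (summable_geometric_of_lt_one (norm_nonneg t) ht).mul_right _
  · intro m
    rw [norm_mul, norm_pow]
    exact mul_le_mul_of_nonneg_left (gb_norm_le Q hQ k _) (by positivity)

lemma stepB (Q : ℂ) (hQ : ‖Q‖ < 1) : ∀ (k : ℕ) (t : ℂ), ‖t‖ < 1 →
    ∑' m : ℕ, t^m * gb Q (m+k) k = ∏ j ∈ range (k+1), (1 - t * Q^j)⁻¹ := by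
  intro k
  induction k with
  | zero =>
    intro t ht
    simp only [Nat.add_zero, gb_zero_right, mul_one, Finset.prod_range_one, pow_zero]
    rw [tsum_geometric_of_norm_lt_one ht]
    simp
  | succ k ih =>
    intro t ht
    have hQt : ‖t*Q‖ < 1 := by
      rw [norm_mul]
      calc ‖t‖ * ‖Q‖ ≤ 1 * ‖Q‖ := by
            apply mul_le_mul_of_nonneg_right ht.le (norm_nonneg _)
        _ = ‖Q‖ := one_mul _
        _ < 1 := hQ
    have h1 : ∀ m : ℕ, t^m * gb Q (m+(k+1)) (k+1)
        = t^m * gb Q (m+k) (k+1) + (t*Q)^m * gb Q (m+k) k := by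
      intro m
      have h2 : m + (k+1) = (m+k) + 1 := by omega
      rw [h2, gb_succ_succ]
      have h3 : m + k - k = m := by omega
      rw [h3, mul_pow]
      ring
    have hsum1 := summable_aux Q t hQ ht k (k+1)
    have hsum2 := summable_aux Q (t*Q) hQ hQt k k
    have hA : ∑' m : ℕ, t^m * gb Q (m+k) (k+1)
        = t * ∑' m : ℕ, t^m * gb Q (m+(k+1)) (k+1) := by
      rw [Summable.tsum_eq_zero_add hsum1]
      rw [show (0:ℕ) + k = k from by omega]
      rw [gb_eq_zero Q k (k+1) (by omega), mul_zero, zero_add]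
      rw [← tsum_mul_left]
      apply tsum_congr
      intro m
      have h2 : m + 1 + k = m + (k+1) := by omega
      rw [h2, pow_succ]
      ring
    set L := ∑' m : ℕ, t^m * gb Q (m+(k+1)) (k+1) with hL
    have h1t : (1:ℂ) - t ≠ 0 := by
      intro h
      have : t = 1 := by linear_combination -h
      rw [this] at ht; norm_num at ht
    -- goal: t * L + ∏ = ∏ range (k+2)
    have hprod : ∏ j ∈ range (k+2), (1 - t * Q^j)⁻¹
        = (∏ j ∈ range (k+1), (1 - t*Q * Q^j)⁻¹) * (1 - t)⁻¹ := by
      rw [Finset.prod_range_succ' (fun j => (1 - t * Q^j)⁻¹) (k+1)]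
      congr 1
      · apply Finset.prod_congr rfl
        intro j _
        congr 2
        rw [pow_succ]
        ring
      · rw [pow_zero, mul_one]
    rw [hprod]
    set C := ∏ j ∈ range (k+1), (1 - t*Q * Q^j)⁻¹ with hC
    have hrec : L = t * L + C := by
      calc L = ∑' m : ℕ, (t^m * gb Q (m+k) (k+1) + (t*Q)^m * gb Q (m+k) k) :=
            tsum_congr h1
        _ = (∑' m : ℕ, t^m * gb Q (m+k) (k+1)) + ∑' m : ℕ, (t*Q)^m * gb Q (m+k) k :=
            Summable.tsum_add hsum1 hsum2
        _ = t * L + C := by rw [hA, ih (t*Q) hQt]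
    have hsolve : (1 - t) * L = C := by linear_combination hrec
    rw [← hsolve, mul_comm (1-t) L, mul_assoc, mul_inv_cancel₀ h1t, mul_one]

lemma sqsum (r c : ℝ) (hr0 : 0 ≤ r) (hr : r < 1) (hc : 0 ≤ c) :
    Summable (fun n : ℕ => r^(n^2) * c^n) := by
  obtain ⟨N, hN⟩ : ∃ N : ℕ, r^N * c < 1 := by
    have h0 : Filter.Tendsto (fun N : ℕ => r^N * c) Filter.atTop (nhds (0*c)) :=
      (tendsto_pow_atTop_nhds_zero_of_lt_one hr0 hr).mul_const c
    rw [zero_mul] at h0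
    exact (h0.eventually_lt_const (by norm_num : (0:ℝ) < 1)).exists
  set s := r^N * c with hs
  have hs0 : 0 ≤ s := by positivity
  apply (summable_nat_add_iff N).1
  refine Summable.of_nonneg_of_le (fun n => by positivity) (fun n => ?_)
    (summable_geometric_of_lt_one hs0 hN)
  calc r^((n+N)^2) * c^(n+N)
      ≤ r^(N*(n+N)) * c^(n+N) := by
        apply mul_le_mul_of_nonneg_right _ (by positivity)
        exact pow_le_pow_of_le_one hr0 hr.le (by nlinarith)
    _ = s^(n+N) := by rw [hs, mul_pow, ← pow_mul, Nat.mul_comm N (n+N)]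
    _ = s^n * s^N := by rw [pow_add]
    _ ≤ s^n * 1 := by
        apply mul_le_mul_of_nonneg_left _ (by positivity)
        exact pow_le_one₀ hs0 hN.le
    _ = s^n := mul_one _

set_option maxHeartbeats 1000000 in
theorem phi_alternate_representation (q : ℂ) (hq : ‖q‖ < 1) :
    ∑' n : ℕ, q ^ (n ^ 2) / ∏ j ∈ Finset.range n, (1 + q ^ (2 * (j + 1))) =
      1 + ∑' n : ℕ,
        (∏ j ∈ Finset.range n, (1 - q ^ (2 * j + 1))) * (-1) ^ n * q ^ (2 * n + 1) := by
  set Q : ℂ := q^2 with hQdef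
  have hQ : ‖Q‖ < 1 := by
    rw [hQdef, norm_pow]
    calc ‖q‖^2 ≤ ‖q‖ * 1 := by
          rw [sq]; exact mul_le_mul_of_nonneg_left hq.le (norm_nonneg _)
      _ < 1 := by rwa [mul_one]
  have hmQ : ‖-Q‖ < 1 := by rwa [norm_neg]
  have h1Q : (0:ℝ) < 1 - ‖Q‖ := by linarith
  set c : ℝ := (1 - ‖Q‖)⁻¹ with hcdef
  have hc0 : (0:ℝ) ≤ c := by positivity
  set F : ℕ → ℕ → ℂ := fun n k => (-1)^n * q^(2*n+1) * ((-1)^k * q^(k^2) * gb Q n k)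
    with hFdef
  have hFnorm : ∀ n k, ‖F n k‖ ≤ ‖q‖^(2*n+1) * (‖q‖^(k^2) * c^k) := by
    intro n k
    have : ‖F n k‖ = ‖q‖^(2*n+1) * (‖q‖^(k^2) * ‖gb Q n k‖) := by
      simp [hFdef, norm_mul, norm_pow]
    rw [this]
    apply mul_le_mul_of_nonneg_left _ (by positivity)
    exact mul_le_mul_of_nonneg_left (gb_norm_le Q hQ k n) (by positivity)
  -- summabilities
  have hgeo : Summable (fun n : ℕ => ‖q‖^(2*n+1)) := by
    have : (fun n : ℕ => ‖q‖^(2*n+1)) = fun n : ℕ => (‖q‖^2)^n * ‖q‖ := by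
      funext n
      rw [pow_succ, pow_mul]
    rw [this]
    apply Summable.mul_right
    apply summable_geometric_of_lt_one (by positivity)
    rwa [← norm_pow]
  have hsq : Summable (fun k : ℕ => ‖q‖^(k^2) * c^k) := sqsum _ _ (norm_nonneg _) hq hc0
  have hFsummable : Summable (Function.uncurry F) := by
    apply Summable.of_norm_bounded
      (g := fun p : ℕ × ℕ => ‖q‖^(2*p.1+1) * (‖q‖^(p.2^2) * c^(p.2)))
      (hgeo.mul_of_nonneg hsq (fun n => by positivity) (fun k => by positivity))
    intro p
    exact hFnorm p.1 p.2
  have h₁ : ∀ n, Summable (fun k => F n k) := by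
    intro n
    apply Summable.of_norm_bounded (g := fun k => ‖q‖^(2*n+1) * (‖q‖^(k^2) * c^k))
      (hsq.mul_left _)
    exact hFnorm n
  have h₂ : ∀ k, Summable (fun n => F n k) := by
    intro k
    apply Summable.of_norm_bounded (g := fun n => ‖q‖^(2*n+1) * (‖q‖^(k^2) * c^k))
      (hgeo.mul_right _)
    exact fun n => hFnorm n k
  -- b n = ∑' k, F n k
  have hb : ∀ n : ℕ, (∏ j ∈ range n, (1 - q^(2*j+1))) * (-1)^n * q^(2*n+1)
      = ∑' k, F n k := by
    intro n
    rw [stepA q n]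
    rw [tsum_eq_sum (s := range (n+1))
      (f := fun k => F n k)
      (fun k hk => by
        rw [Finset.mem_range, not_lt] at hk
        simp only [hFdef]
        rw [gb_eq_zero Q n k (by omega), mul_zero, mul_zero])]
    rw [Finset.sum_mul, Finset.sum_mul]
    apply Finset.sum_congr rfl
    intro k _
    simp only [hFdef]
    ring
  -- inner sum evaluation
  have hinner : ∀ k : ℕ, ∑' n, F n k
      = q^((k+1)^2) * ∏ j ∈ range (k+1), (1 + Q^(j+1))⁻¹ := by
    intro k
    have hshift : ∑' m : ℕ, F (m+k) k = ∑' n, F n k := by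
      apply Function.Injective.tsum_eq (g := fun m : ℕ => m + k)
        (f := fun n => F n k) (add_left_injective k)
      intro n hn
      rw [Function.mem_support] at hn
      rcases le_or_gt k n with h | h
      · exact ⟨n - k, by show n - k + k = n; omega⟩
      · exfalso
        apply hn
        simp only [hFdef]
        rw [gb_eq_zero Q n k h, mul_zero, mul_zero]
    rw [← hshift]
    have hterm : ∀ m : ℕ, F (m+k) k = q^((k+1)^2) * ((-Q)^m * gb Q (m+k) k) := by
      intro m
      simp only [hFdef]
      have hsign : ((-1:ℂ))^(m+k) * (-1)^k = (-1)^m := by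
        rw [pow_add, mul_assoc, ← mul_pow]
        norm_num
      have hq' : q^(2*(m+k)+1) * q^(k^2) = q^(2*m) * q^((k+1)^2) := by
        rw [← pow_add, ← pow_add]
        congr 1
        have : (k+1)^2 = k^2+2*k+1 := by ring
        omega
      have hQm : ((-1:ℂ))^m * q^(2*m) = (-Q)^m := by
        conv_rhs => rw [neg_pow]
        rw [hQdef, pow_mul]
      calc (-1:ℂ)^(m+k) * q^(2*(m+k)+1) * ((-1)^k * q^(k^2) * gb Q (m+k) k)
          = ((-1)^(m+k) * (-1)^k) * (q^(2*(m+k)+1) * q^(k^2)) * gb Q (m+k) k := by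
            ring
        _ = (-1)^m * (q^(2*m) * q^((k+1)^2)) * gb Q (m+k) k := by
            rw [hsign, hq']
        _ = q^((k+1)^2) * (((-1)^m * q^(2*m)) * gb Q (m+k) k) := by ring
        _ = q^((k+1)^2) * ((-Q)^m * gb Q (m+k) k) := by rw [hQm]
    rw [tsum_congr hterm, tsum_mul_left, stepB Q hQ k (-Q) hmQ]
    congr 1
    apply Finset.prod_congr rfl
    intro j _
    congr 1
    rw [pow_succ]
    ring
  -- a summable
  have hden : ∀ n : ℕ, (1-‖Q‖)^n ≤ ‖∏ j ∈ range n, (1 + q^(2*(j+1)))‖ := by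
    intro n
    rw [norm_prod]
    calc (1-‖Q‖)^n = ∏ _j ∈ range n, (1-‖Q‖) := by
          rw [Finset.prod_const, Finset.card_range]
      _ ≤ ∏ j ∈ range n, ‖1 + q^(2*(j+1))‖ := ?_
    apply Finset.prod_le_prod (fun j _ => h1Q.le)
    intro j _
    have hw : ‖q^(2*(j+1))‖ ≤ ‖Q‖ := by
      rw [hQdef, norm_pow, norm_pow]
      rw [show 2*(j+1) = 2 + 2*j from by omega, pow_add]
      calc ‖q‖^2 * ‖q‖^(2*j) ≤ ‖q‖^2 * 1 := by
            apply mul_le_mul_of_nonneg_left _ (by positivity)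
            exact pow_le_one₀ (norm_nonneg _) hq.le
        _ = ‖q‖^2 := mul_one _
    calc 1 - ‖Q‖ ≤ 1 - ‖q^(2*(j+1))‖ := by linarith
      _ = ‖(1:ℂ)‖ - ‖-(q^(2*(j+1)))‖ := by rw [norm_neg, norm_one]
      _ ≤ ‖(1:ℂ) - (-(q^(2*(j+1))))‖ := norm_sub_norm_le _ _
      _ = ‖1 + q^(2*(j+1))‖ := by rw [sub_neg_eq_add]
  have hdenpos : ∀ n : ℕ, (0:ℝ) < ‖∏ j ∈ range n, (1 + q^(2*(j+1)))‖ :=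
    fun n => lt_of_lt_of_le (by positivity) (hden n)
  have hsa : Summable (fun n : ℕ => q^(n^2) / ∏ j ∈ range n, (1 + q^(2*(j+1)))) := by
    apply Summable.of_norm_bounded (g := fun n => ‖q‖^(n^2) * c^n)
      (sqsum _ _ (norm_nonneg _) hq hc0)
    intro n
    rw [norm_div, norm_pow, div_eq_mul_inv]
    apply mul_le_mul_of_nonneg_left _ (by positivity)
    rw [hcdef, inv_pow]
    apply inv_anti₀ (by positivity) (hden n)
  -- final chain
  have hsplit := Summable.tsum_eq_zero_add hsa
  rw [hsplit]
  have ha0 : q^((0:ℕ)^2) / ∏ j ∈ range 0, (1 + q^(2*(j+1))) = 1 := by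
    norm_num
  rw [ha0]
  congr 1
  -- ∑' k, a (k+1) = ∑' n, b n
  have hbchain : ∑' n : ℕ, (∏ j ∈ range n, (1 - q^(2*j+1))) * (-1)^n * q^(2*n+1)
      = ∑' k : ℕ, q^((k+1)^2) / ∏ j ∈ range (k+1), (1 + q^(2*(j+1))) := by
    calc ∑' n : ℕ, (∏ j ∈ range n, (1 - q^(2*j+1))) * (-1)^n * q^(2*n+1)
        = ∑' n : ℕ, ∑' k : ℕ, F n k := tsum_congr hb
      _ = ∑' k : ℕ, ∑' n : ℕ, F n k := (Summable.tsum_comm' hFsummable h₁ h₂).symm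
      _ = ∑' k : ℕ, q^((k+1)^2) * ∏ j ∈ range (k+1), (1 + Q^(j+1))⁻¹ :=
          tsum_congr hinner
      _ = ∑' k : ℕ, q^((k+1)^2) / ∏ j ∈ range (k+1), (1 + q^(2*(j+1))) := by
          apply tsum_congr
          intro k
          rw [div_eq_mul_inv, ← Finset.prod_inv_distrib]
          congr 1
          apply Finset.prod_congr rfl
          intro j _
          rw [hQdef, ← pow_mul]
  rw [hbchain]
end

section
/- As an identity of formal power series in q (equivalently, for |q|<1), Ramanujan's third order mock theta function ν(q) := ∑_{n≥0} q^{n²+n}/(-q;q²)_{n+1} equals ν̃(q) := ∑_{n≥0} (q;q²)_n (-1)^n q^n, where (-q;q²)_{n+1} := ∏_{j=0}^{n}(1 + q^{2j+1}) and (q;q²)_n := ∏_{j=0}^{n-1}(1 - q^{2j+1}). -/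
open Finset Filter

noncomputable def nuD (q : ℂ) (n : ℕ) : ℂ := ∏ j ∈ Finset.range (n+1), (1 + q ^ (2*j+1))

noncomputable def nuU (q : ℂ) (k n : ℕ) : ℂ := q ^ (n*(n+1+2*k)+k) / nuD q n

noncomputable def nuP (q : ℂ) (k : ℕ) : ℂ := ∏ j ∈ Finset.range k, (1 - q ^ (2*j+1))

noncomputable def nuV (q : ℂ) (k : ℕ) : ℕ → ℂ
  | 0 => q ^ k
  | (n+1) => q ^ (2*k+1) * nuU q (k+1) n

noncomputable def nuS (q : ℂ) (k : ℕ) : ℂ := (-1) ^ k * nuP q k * (∑' n, nuU q k n)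

noncomputable def nuG (r : ℝ) (n : ℕ) : ℝ := r ^ (n*(n+1)) / (1-r) ^ (n+1)

private lemma nu_div_helper {X c d : ℝ} (hc : c ≠ 0) (hd : d ≠ 0) :
    X * (d/2) / (c * d) = 1/2 * (X / c) := by
  field_simp

section main
variable {q : ℂ} (hq : ‖q‖ < 1)
include hq

lemma nu_one_add_ne (j : ℕ) : 1 + q ^ (2*j+1) ≠ 0 := by
  intro h
  have h1 : q ^ (2*j+1) = -1 := by linear_combination h
  have : ‖q ^ (2*j+1)‖ < 1 := by
    rw [norm_pow]
    exact pow_lt_one₀ (norm_nonneg q) hq (by omega)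
  rw [h1] at this; simp at this

lemma nuD_ne_zero (n : ℕ) : nuD q n ≠ 0 :=
  Finset.prod_ne_zero_iff.2 fun j _ => nu_one_add_ne hq j

lemma nu_one_add_lower (j : ℕ) : 1 - ‖q‖ ≤ ‖1 + q ^ (2*j+1)‖ := by
  have h1 : ‖q ^ (2*j+1)‖ ≤ ‖q‖ := by
    rw [norm_pow]
    calc ‖q‖ ^ (2*j+1) ≤ ‖q‖ ^ 1 := pow_le_pow_of_le_one (norm_nonneg q) hq.le (by omega)
      _ = ‖q‖ := pow_one _
  have h2 : ‖(1:ℂ)‖ ≤ ‖1 + q ^ (2*j+1)‖ + ‖-(q ^ (2*j+1))‖ := by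
    have := norm_add_le (1 + q ^ (2*j+1)) (-(q ^ (2*j+1)))
    simpa using this
  rw [norm_one, norm_neg] at h2
  linarith

lemma nuD_norm_lower (n : ℕ) : (1 - ‖q‖) ^ (n+1) ≤ ‖nuD q n‖ := by
  rw [nuD, norm_prod]
  calc (1 - ‖q‖) ^ (n+1) = ∏ _j ∈ Finset.range (n+1), (1 - ‖q‖) := by
        rw [Finset.prod_const, Finset.card_range]
    _ ≤ ∏ j ∈ Finset.range (n+1), ‖1 + q ^ (2*j+1)‖ :=
        Finset.prod_le_prod (fun j _ => by linarith [hq]) (fun j _ => nu_one_add_lower hq j)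

omit hq in
lemma nuD_succ (n : ℕ) : nuD q (n+1) = nuD q n * (1 + q ^ (2*(n+1)+1)) := by
  simp [nuD, Finset.prod_range_succ]

/-- the key termwise identity -/
lemma nu_term_identity (k : ℕ) : ∀ n : ℕ,
    nuU q k n = nuV q k n - nuU q (k+1) n := by
  intro n
  match n with
  | 0 =>
    have h : (1 + q) ≠ 0 := by
      have h0 := nu_one_add_ne (q := q) hq 0
      simpa using h0
    have hD : nuD q 0 = 1 + q := by simp [nuD]
    simp only [nuU, nuV, hD, Nat.zero_mul, Nat.zero_add]
    rw [pow_succ]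
    field_simp
    ring
  | (m+1) =>
    simp only [nuU, nuV]
    rw [nuD_succ]
    have h1 : nuD q m ≠ 0 := nuD_ne_zero hq m
    have h2 : 1 + q ^ (2*(m+1)+1) ≠ 0 := nu_one_add_ne hq (m+1)
    rw [show (m+1)*((m+1)+1+2*k)+k = (m*(m+1+2*(k+1))+(k+1)) + (2*k+1) by ring,
      show (m+1)*((m+1)+1+2*(k+1))+(k+1)
        = (m*(m+1+2*(k+1))+(k+1)) + (2*k+1) + (2*(m+1)+1) by ring]
    field_simp
    ring

/-- summability of the u-series -/
lemma nu_summable_u (k : ℕ) : Summable (nuU q k) := by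
  apply summable_of_ratio_norm_eventually_le (r := 1/2) (by norm_num)
  have h0 : Tendsto (fun n : ℕ => ‖q‖ ^ n) atTop (nhds 0) :=
    tendsto_pow_atTop_nhds_zero_of_lt_one (norm_nonneg q) hq
  have hev : ∀ᶠ n : ℕ in atTop, ‖q‖ ^ n ≤ (1 - ‖q‖)/2 := by
    have hp : (0:ℝ) < (1 - ‖q‖)/2 := by linarith
    filter_upwards [h0.eventually (gt_mem_nhds hp)] with n hn using hn.le
  filter_upwards [hev] with n hn
  have hDn : (0:ℝ) < ‖nuD q n‖ := norm_pos_iff.2 (nuD_ne_zero hq n)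
  have key : ‖nuU q k (n+1)‖
      = ‖q‖ ^ ((n+1)*((n+1)+1+2*k)+k) / (‖nuD q n‖ * ‖1 + q ^ (2*(n+1)+1)‖) := by
    rw [nuU, nuD_succ, norm_div, norm_pow, norm_mul]
  have hfac : 1 - ‖q‖ ≤ ‖1 + q ^ (2*(n+1)+1)‖ := nu_one_add_lower hq (n+1)
  have hq1 : ‖q‖ ^ (2*n+2+2*k) ≤ ‖q‖ ^ n :=
    pow_le_pow_of_le_one (norm_nonneg q) hq.le (by omega)
  have hpos1 : (0:ℝ) < 1 - ‖q‖ := by linarith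
  calc ‖nuU q k (n+1)‖
      = ‖q‖ ^ ((n*(n+1+2*k)+k)) * ‖q‖ ^ (2*n+2+2*k) / (‖nuD q n‖ * ‖1 + q ^ (2*(n+1)+1)‖) := by
        rw [key, show (n+1)*((n+1)+1+2*k)+k = (n*(n+1+2*k)+k) + (2*n+2+2*k) by ring, pow_add]
    _ ≤ ‖q‖ ^ ((n*(n+1+2*k)+k)) * ((1-‖q‖)/2) / (‖nuD q n‖ * (1 - ‖q‖)) := by
        apply div_le_div₀ (by positivity)
          (mul_le_mul_of_nonneg_left (le_trans hq1 hn) (by positivity))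
          (by positivity)
          (mul_le_mul_of_nonneg_left hfac hDn.le)
    _ = 1/2 * ‖nuU q k n‖ := by
        rw [nuU, norm_div, norm_pow]
        exact nu_div_helper hDn.ne' hpos1.ne'

lemma nu_ukey (k : ℕ) :
    (∑' n, nuU q k n)
      = q ^ k + q ^ (2*k+1) * (∑' n, nuU q (k+1) n) - (∑' n, nuU q (k+1) n) := by
  have hsv : Summable (nuV q k) := by
    rw [← summable_nat_add_iff 1]
    have hfe : (fun n => nuV q k (n+1)) = fun n => q ^ (2*k+1) * nuU q (k+1) n := by
      funext n; rfl
    rw [hfe]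
    exact (nu_summable_u hq (k+1)).mul_left _
  have h1 : (∑' n, nuU q k n) = (∑' n, nuV q k n) - (∑' n, nuU q (k+1) n) := by
    rw [← Summable.tsum_sub hsv (nu_summable_u hq (k+1))]
    exact tsum_congr fun n => nu_term_identity hq k n
  have h2 : (∑' n, nuV q k n) = q ^ k + q ^ (2*k+1) * (∑' n, nuU q (k+1) n) := by
    rw [Summable.tsum_eq_zero_add hsv]
    congr 1
    rw [← tsum_mul_left]
    exact tsum_congr fun n => rfl
  rw [h1, h2]

omit hq in
lemma nuP_succ (k : ℕ) : nuP q (k+1) = nuP q k * (1 - q ^ (2*k+1)) := by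
  simp [nuP, Finset.prod_range_succ]

lemma nuS_step (k : ℕ) : nuS q k - nuS q (k+1) = nuP q k * (-1) ^ k * q ^ k := by
  rw [nuS, nuS, nu_ukey hq k, nuP_succ]
  ring

lemma nu_summable_g : Summable (nuG ‖q‖) := by
  have hr0 : (0:ℝ) ≤ ‖q‖ := norm_nonneg q
  have hpos1 : (0:ℝ) < 1 - ‖q‖ := by linarith
  apply summable_of_ratio_norm_eventually_le (r := 1/2) (by norm_num)
  have h0 : Tendsto (fun n : ℕ => ‖q‖ ^ n) atTop (nhds 0) :=
    tendsto_pow_atTop_nhds_zero_of_lt_one hr0 hq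
  have hev : ∀ᶠ n : ℕ in atTop, ‖q‖ ^ n ≤ (1 - ‖q‖)/2 := by
    have hp : (0:ℝ) < (1 - ‖q‖)/2 := by linarith
    filter_upwards [h0.eventually (gt_mem_nhds hp)] with n hn using hn.le
  filter_upwards [hev] with n hn
  have hgn : 0 ≤ nuG ‖q‖ n := by rw [nuG]; positivity
  have hgn1 : 0 ≤ nuG ‖q‖ (n+1) := by rw [nuG]; positivity
  rw [Real.norm_of_nonneg hgn1, Real.norm_of_nonneg hgn, nuG, nuG]
  have hq1 : ‖q‖ ^ (2*n+2) ≤ ‖q‖ ^ n := pow_le_pow_of_le_one hr0 hq.le (by omega)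
  calc ‖q‖ ^ ((n+1)*((n+1)+1)) / (1-‖q‖) ^ (n+1+1)
      = ‖q‖ ^ (n*(n+1)) * ‖q‖ ^ (2*n+2) / ((1-‖q‖) ^ (n+1) * (1-‖q‖)) := by
        rw [show (n+1)*((n+1)+1) = n*(n+1) + (2*n+2) by ring, pow_add,
          pow_succ (1-‖q‖) (n+1)]
    _ ≤ ‖q‖ ^ (n*(n+1)) * ((1-‖q‖)/2) / ((1-‖q‖) ^ (n+1) * (1-‖q‖)) := by
        apply div_le_div₀ (by positivity)
          (mul_le_mul_of_nonneg_left (le_trans hq1 hn) (by positivity))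
          (by positivity) (le_refl _)
    _ = 1/2 * (‖q‖ ^ (n*(n+1)) / (1-‖q‖) ^ (n+1)) :=
        nu_div_helper (by positivity) hpos1.ne'

lemma nu_u_bound (k n : ℕ) : ‖nuU q k n‖ ≤ ‖q‖ ^ k * nuG ‖q‖ n := by
  have hr0 : (0:ℝ) ≤ ‖q‖ := norm_nonneg q
  have hpos1 : (0:ℝ) < 1 - ‖q‖ := by linarith
  rw [nuU, norm_div, norm_pow, nuG]
  have h1 : ‖q‖ ^ (n*(n+1+2*k)+k) ≤ ‖q‖ ^ (n*(n+1)) * ‖q‖ ^ k := by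
    rw [← pow_add]
    exact pow_le_pow_of_le_one hr0 hq.le (by nlinarith)
  calc ‖q‖ ^ (n*(n+1+2*k)+k) / ‖nuD q n‖
      ≤ (‖q‖ ^ (n*(n+1)) * ‖q‖ ^ k) / (1-‖q‖) ^ (n+1) :=
        div_le_div₀ (by positivity) h1 (by positivity) (nuD_norm_lower hq n)
    _ = ‖q‖ ^ k * (‖q‖ ^ (n*(n+1)) / (1-‖q‖) ^ (n+1)) := by ring

lemma nu_A_bound (k : ℕ) : ‖∑' n, nuU q k n‖ ≤ ‖q‖ ^ k * (∑' n, nuG ‖q‖ n) := by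
  have h := tsum_of_norm_bounded (((nu_summable_g hq).mul_left (‖q‖ ^ k)).hasSum)
    (nu_u_bound hq k)
  rwa [tsum_mul_left] at h

lemma nuP_bound (k : ℕ) : ‖nuP q k‖ ≤ Real.exp ((1 - ‖q‖)⁻¹) := by
  have hr0 : (0:ℝ) ≤ ‖q‖ := norm_nonneg q
  rw [nuP, norm_prod]
  calc ∏ j ∈ Finset.range k, ‖1 - q ^ (2*j+1)‖
      ≤ ∏ j ∈ Finset.range k, Real.exp (‖q‖ ^ j) := by
        apply Finset.prod_le_prod (fun j _ => norm_nonneg _)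
        intro j _
        have h1 : ‖1 - q ^ (2*j+1)‖ ≤ 1 + ‖q‖ ^ (2*j+1) := by
          calc ‖1 - q ^ (2*j+1)‖ ≤ ‖(1:ℂ)‖ + ‖q ^ (2*j+1)‖ := norm_sub_le _ _
            _ = 1 + ‖q‖ ^ (2*j+1) := by rw [norm_one, norm_pow]
        have h2 : ‖q‖ ^ (2*j+1) ≤ ‖q‖ ^ j := pow_le_pow_of_le_one hr0 hq.le (by omega)
        have h3 : ‖q‖ ^ j + 1 ≤ Real.exp (‖q‖ ^ j) := Real.add_one_le_exp _
        linarith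
    _ = Real.exp (∑ j ∈ Finset.range k, ‖q‖ ^ j) := (Real.exp_sum _ _).symm
    _ ≤ Real.exp ((1 - ‖q‖)⁻¹) := by
        apply Real.exp_le_exp.2
        calc ∑ j ∈ Finset.range k, ‖q‖ ^ j ≤ ∑' j : ℕ, ‖q‖ ^ j :=
              Summable.sum_le_tsum _ (fun j _ => by positivity) (summable_geometric_of_lt_one hr0 hq)
          _ = (1 - ‖q‖)⁻¹ := tsum_geometric_of_lt_one hr0 hq

lemma nuS_tendsto : Tendsto (fun k => nuS q k) atTop (nhds 0) := by
  rw [tendsto_zero_iff_norm_tendsto_zero]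
  apply squeeze_zero (fun k => norm_nonneg _)
    (g := fun k => (Real.exp ((1 - ‖q‖)⁻¹) * (∑' n, nuG ‖q‖ n)) * ‖q‖ ^ k)
  · intro k
    rw [nuS]
    calc ‖(-1:ℂ) ^ k * nuP q k * (∑' n, nuU q k n)‖
        = ‖nuP q k‖ * ‖∑' n, nuU q k n‖ := by
          rw [norm_mul, norm_mul, norm_pow, norm_neg, norm_one, one_pow, one_mul]
      _ ≤ Real.exp ((1 - ‖q‖)⁻¹) * (‖q‖ ^ k * (∑' n, nuG ‖q‖ n)) :=
          mul_le_mul (nuP_bound hq k) (nu_A_bound hq k) (norm_nonneg _) (Real.exp_pos _).le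
      _ = (Real.exp ((1 - ‖q‖)⁻¹) * (∑' n, nuG ‖q‖ n)) * ‖q‖ ^ k := by ring
  · have h := (tendsto_pow_atTop_nhds_zero_of_lt_one (norm_nonneg q) hq).const_mul
      (Real.exp ((1 - ‖q‖)⁻¹) * (∑' n, nuG ‖q‖ n))
    simpa using h

lemma nu_summable_b : Summable (fun k => nuP q k * (-1) ^ k * q ^ k) := by
  apply Summable.of_norm_bounded (g := fun k => Real.exp ((1 - ‖q‖)⁻¹) * ‖q‖ ^ k)
    (((summable_geometric_of_lt_one (norm_nonneg q) hq)).mul_left _)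
  intro k
  rw [norm_mul, norm_mul, norm_pow, norm_pow, norm_neg, norm_one, one_pow, mul_one]
  exact mul_le_mul_of_nonneg_right (nuP_bound hq k) (by positivity)

end main

theorem nu_alternate_representation (q : ℂ) (hq : ‖q‖ < 1) :
    ∑' n : ℕ, q ^ (n ^ 2 + n) / ∏ j ∈ Finset.range (n + 1), (1 + q ^ (2 * j + 1)) =
      ∑' n : ℕ, (∏ j ∈ Finset.range n, (1 - q ^ (2 * j + 1))) * (-1) ^ n * q ^ n := by
  have hLHS : (∑' n : ℕ, q ^ (n ^ 2 + n) / ∏ j ∈ Finset.range (n + 1), (1 + q ^ (2 * j + 1)))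
      = nuS q 0 := by
    rw [nuS]
    simp only [pow_zero, one_mul, nuP, Finset.range_zero, Finset.prod_empty]
    apply tsum_congr
    intro n
    rw [nuU, nuD]
    congr 2
    ring
  have hsb := nu_summable_b hq
  have htel : ∀ K : ℕ, ∑ k ∈ Finset.range K, nuP q k * (-1) ^ k * q ^ k = nuS q 0 - nuS q K := by
    intro K
    rw [← Finset.sum_range_sub' (fun k => nuS q k) K]
    exact Finset.sum_congr rfl fun k _ => (nuS_step hq k).symm
  have h1 : Filter.Tendsto (fun K => ∑ k ∈ Finset.range K, nuP q k * (-1) ^ k * q ^ k)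
      Filter.atTop (nhds (∑' k, nuP q k * (-1) ^ k * q ^ k)) := hsb.hasSum.tendsto_sum_nat
  have h2 : Filter.Tendsto (fun K => ∑ k ∈ Finset.range K, nuP q k * (-1) ^ k * q ^ k)
      Filter.atTop (nhds (nuS q 0)) := by
    simp only [htel]
    have h := (nuS_tendsto hq).const_sub (nuS q 0)
    simpa using h
  rw [hLHS, ← tendsto_nhds_unique h1 h2]
  exact tsum_congr fun k => rfl
end

section
/- For |q| < 1 and b a complex number with |b^{-1}q²| small enough that all series converge (e.g. b^{-2}q^{4m+4} ≠ 1 for all m ≥ 0 and |q| < 1), the identity ∑_{n≥0} q^{n²+n}/(b^{-1}q²;q²)_{n+1} = (∑_{ℓ≥0} q^{ℓ²+ℓ}) · ∏_{m≥0} 1/(1 - b^{-2}q^{4m+4}) + (b^{-1}q²/(1 - b^{-2}q⁴)) · ∑_{n≥0} q^{2n}/(b^{-2}q⁸;q⁴)_n holds, where (a;Q)_n := ∏_{j=0}^{n-1}(1 - a Q^j). -/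
open Filter Finset Topology

namespace FineAux

lemma exp_le_one_sub {x : ℝ} (h0 : 0 ≤ x) (h2 : x ≤ 1/2) : Real.exp (-2*x) ≤ 1 - x := by
  have h1 : (1:ℝ) + 2*x ≤ Real.exp (2*x) := by
    have := Real.add_one_le_exp (2*x); linarith
  have hpos : (0:ℝ) < 1 + 2*x := by linarith
  have h3 : Real.exp (-2*x) ≤ (1+2*x)⁻¹ := by
    rw [show (-2*x : ℝ) = -(2*x) by ring, Real.exp_neg]
    exact inv_anti₀ hpos h1
  refine h3.trans ?_
  rw [inv_le_iff_one_le_mul₀ hpos]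
  nlinarith

lemma prod_lb_of_small (u : ℕ → ℂ) (M : ℝ) (s : Finset ℕ)
    (hsmall : ∀ j ∈ s, ‖u j‖ ≤ 1/2) (hM : ∑ j ∈ s, ‖u j‖ ≤ M) :
    Real.exp (-2*M) ≤ ‖∏ j ∈ s, (1 - u j)‖ := by
  have h1 : ∏ j ∈ s, Real.exp (-2*‖u j‖) ≤ ∏ j ∈ s, (1-‖u j‖) :=
    Finset.prod_le_prod (fun j _ => (Real.exp_pos _).le)
      (fun j hj => exp_le_one_sub (norm_nonneg _) (hsmall j hj))
  have h2 : ∏ j ∈ s, ((1:ℝ)-‖u j‖) ≤ ∏ j ∈ s, ‖1 - u j‖ := by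
    refine Finset.prod_le_prod (fun j hj => by linarith [hsmall j hj]) (fun j hj => ?_)
    calc (1:ℝ) - ‖u j‖ = ‖(1:ℂ)‖ - ‖u j‖ := by simp
    _ ≤ ‖1 - u j‖ := norm_sub_norm_le 1 (u j)
  have h0 : Real.exp (-2*M) ≤ ∏ j ∈ s, Real.exp (-2*‖u j‖) := by
    rw [← Real.exp_sum]
    apply Real.exp_le_exp.2
    have : ∑ j ∈ s, -2*‖u j‖ = -2 * ∑ j ∈ s, ‖u j‖ := by
      rw [Finset.mul_sum]
    rw [this]; nlinarith
  rw [norm_prod]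
  exact h0.trans (h1.trans h2)

/-- Lower bound for partial products of `(1 - u j)` when `u` is absolutely summable
and all factors are nonzero. -/
lemma exists_prod_lb (u : ℕ → ℂ) (hu : Summable fun j => ‖u j‖)
    (h : ∀ j, (1:ℂ) - u j ≠ 0) :
    ∃ c > 0, ∀ n, c ≤ ‖∏ j ∈ Finset.range n, (1 - u j)‖ := by
  set M := ∑' j, ‖u j‖ with hMdef
  have hM0 : 0 ≤ M := tsum_nonneg (fun j => norm_nonneg _)
  have htend : Tendsto (fun j => ‖u j‖) atTop (𝓝 0) := hu.tendsto_atTop_zero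
  obtain ⟨J, hJ⟩ : ∃ J, ∀ j ≥ J, ‖u j‖ ≤ 1/2 := by
    have := htend.eventually_le_const (show (0:ℝ) < 1/2 by norm_num)
    exact eventually_atTop.1 this
  set c₁ : ℝ := ∏ j ∈ Finset.range J, min 1 ‖1 - u j‖ with hc₁def
  have hc₁ : 0 < c₁ := Finset.prod_pos (fun j _ => lt_min one_pos (norm_pos_iff.2 (h j)))
  refine ⟨c₁ * Real.exp (-2*M), by positivity, fun n => ?_⟩
  have hminle : ∀ (m : ℕ), ∏ j ∈ Finset.range m, min 1 ‖1 - u j‖ ≤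
      ‖∏ j ∈ Finset.range m, (1 - u j)‖ := by
    intro m
    rw [norm_prod]
    exact Finset.prod_le_prod (fun j _ => le_of_lt (lt_min one_pos (norm_pos_iff.2 (h j))))
      (fun j _ => min_le_right _ _)
  rcases le_or_gt n J with hn | hn
  · -- n ≤ J
    have hsub : Finset.range n ⊆ Finset.range J := Finset.range_subset_range.2 hn
    have : c₁ ≤ ∏ j ∈ Finset.range n, min 1 ‖1 - u j‖ := by
      rw [hc₁def, ← Finset.prod_sdiff hsub]
      have hle1 : ∏ j ∈ Finset.range J \ Finset.range n, min 1 ‖1 - u j‖ ≤ 1 :=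
        Finset.prod_le_one (fun j _ => le_of_lt (lt_min one_pos (norm_pos_iff.2 (h j))))
          (fun j _ => min_le_left _ _)
      have hpos2 : 0 < ∏ j ∈ Finset.range n, min 1 ‖1 - u j‖ :=
        Finset.prod_pos (fun j _ => lt_min one_pos (norm_pos_iff.2 (h j)))
      nlinarith
    calc c₁ * Real.exp (-2*M) ≤ c₁ * 1 := by
          have : Real.exp (-2*M) ≤ 1 := Real.exp_le_one_iff.2 (by nlinarith)
          nlinarith
    _ = c₁ := mul_one c₁
    _ ≤ _ := this.trans (hminle n)
  · -- J < n
    have hsplit : (∏ j ∈ Finset.Ico 0 J, (1 - u j)) * ∏ j ∈ Finset.Ico J n, (1 - u j)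
        = ∏ j ∈ Finset.Ico 0 n, (1 - u j) :=
      Finset.prod_Ico_consecutive _ (Nat.zero_le J) hn.le
    have hIco : Real.exp (-2*M) ≤ ‖∏ j ∈ Finset.Ico J n, (1 - u j)‖ := by
      refine prod_lb_of_small u M _ (fun j hj => hJ j (Finset.mem_Ico.1 hj).1) ?_
      exact Summable.sum_le_tsum _ (fun j _ => norm_nonneg _) hu
    have h1 : c₁ ≤ ‖∏ j ∈ Finset.Ico 0 J, (1 - u j)‖ := by
      have h' := hminle J
      rw [hc₁def, Finset.range_eq_Ico]
      rwa [Finset.range_eq_Ico] at h'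
    calc c₁ * Real.exp (-2*M)
        ≤ ‖∏ j ∈ Finset.Ico 0 J, (1 - u j)‖ * ‖∏ j ∈ Finset.Ico J n, (1 - u j)‖ := by
          apply mul_le_mul h1 hIco (Real.exp_pos _).le (norm_nonneg _)
    _ = ‖∏ j ∈ Finset.range n, (1 - u j)‖ := by
          rw [← norm_mul, hsplit, Finset.range_eq_Ico]

end FineAux

namespace FineAux

noncomputable def Gs (Q s : ℂ) : ℂ :=
  ∑' n : ℕ, Q ^ (n*(n+1)/2) / ∏ j ∈ Finset.range (n+1), (1 - s * Q^j)

noncomputable def Rs (Q s : ℂ) : ℂ :=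
  ∑' n : ℕ, Q ^ n / ∏ j ∈ Finset.range n, (1 - s^2 * Q^2 * Q^(2*j))

noncomputable def Ps (Q s : ℂ) : ℂ := ∏' m : ℕ, (1 - s^2 * Q^(2*m))⁻¹

noncomputable def psi (Q : ℂ) : ℂ := ∑' n : ℕ, Q ^ (n*(n+1)/2)

noncomputable def Fs (Q s : ℂ) : ℂ := psi Q * Ps Q s + s/(1-s^2) * Rs Q s

lemma summable_geo_norm (a r : ℂ) (hr : ‖r‖ < 1) : Summable fun j : ℕ => ‖a * r^j‖ := by
  simp only [norm_mul, norm_pow]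
  exact (summable_geometric_of_lt_one (norm_nonneg r) hr).mul_left _

lemma div_summable {Q : ℂ} (hQ : ‖Q‖ < 1) {c : ℝ} (hc : 0 < c) {den : ℕ → ℂ}
    (hden : ∀ n, c ≤ ‖den n‖) {num : ℕ → ℂ} (hnum : ∀ n, ‖num n‖ ≤ ‖Q‖^n) :
    Summable fun n => num n / den n := by
  apply Summable.of_norm_bounded
    ((summable_geometric_of_lt_one (norm_nonneg Q) hQ).mul_right c⁻¹)
  intro n
  rw [norm_div]
  calc ‖num n‖/‖den n‖ ≤ ‖Q‖^n / c :=
        div_le_div₀ (pow_nonneg (norm_nonneg Q) n) (hnum n) hc (hden n)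
  _ = ‖Q‖^n * c⁻¹ := div_eq_mul_inv _ _

lemma T_le (n : ℕ) : n ≤ n*(n+1)/2 := by
  rw [Nat.le_div_iff_mul_le (by norm_num)]
  rcases n with _ | m
  · simp
  · exact Nat.mul_le_mul le_rfl (by omega)

lemma T_succ (n : ℕ) : (n+1)*(n+1+1)/2 = n*(n+1)/2 + (n+1) := by
  have h : (n+1)*(n+1+1) = n*(n+1) + (n+1)*2 := by ring
  rw [h, Nat.add_mul_div_right _ _ (by norm_num : (0:ℕ) < 2)]

lemma norm_QT_le {Q : ℂ} (hQ : ‖Q‖ < 1) (n : ℕ) : ‖Q ^ (n*(n+1)/2)‖ ≤ ‖Q‖^n := by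
  rw [norm_pow]
  exact pow_le_pow_of_le_one (norm_nonneg Q) hQ.le (T_le n)

lemma G_rec {Q s : ℂ} (hQ : ‖Q‖ < 1) (h1 : ∀ j : ℕ, s * Q^j ≠ 1) :
    (1 - s^2) * Gs Q s = s + Gs Q (s*Q) := by
  have hne : ∀ j : ℕ, (1:ℂ) - s*Q^j ≠ 0 := fun j => sub_ne_zero_of_ne (Ne.symm (h1 j))
  have hne' : ∀ j : ℕ, (1:ℂ) - s*Q^(j+1) ≠ 0 := fun j => hne (j+1)
  have hs0 : (1:ℂ) - s ≠ 0 := by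
    have := hne 0; rwa [pow_zero, mul_one] at this
  set C : ℕ → ℂ := fun n => ∏ j ∈ Finset.range n, (1 - s*Q^(j+1)) with hC
  have hCne : ∀ n, C n ≠ 0 := fun n => Finset.prod_ne_zero_iff.2 (fun j _ => hne' j)
  obtain ⟨c, hc, hclb⟩ : ∃ c > 0, ∀ n, c ≤ ‖C n‖ := by
    apply exists_prod_lb (fun j => s*Q^(j+1)) ?_ (fun j => hne' j)
    apply (summable_geo_norm (s*Q) Q hQ).congr
    intro j
    rw [mul_assoc, ← pow_succ']
  set f : ℕ → ℂ := fun n => Q^(n*(n+1)/2) / C n with hf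
  set g : ℕ → ℂ := fun n => Q^(n*(n+1)/2) / C (n+1) with hg
  have hs_f : Summable f := div_summable hQ hc (fun n => hclb n) (norm_QT_le hQ)
  have hs_g : Summable g := div_summable hQ hc (fun n => hclb (n+1)) (norm_QT_le hQ)
  have e1 : (1-s) * Gs Q s = ∑' n, f n := by
    rw [Gs, ← tsum_mul_left]
    apply tsum_congr
    intro n
    have hprod : ∏ j ∈ Finset.range (n+1), (1 - s * Q^j) = (1 - s) * C n := by
      rw [Finset.prod_range_succ']
      rw [pow_zero, mul_one, mul_comm]
    rw [hprod]
    simp only [hf]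
    rw [show (1-s) * (Q ^ (n*(n+1)/2) / ((1-s) * C n)) = (1-s) * Q ^ (n*(n+1)/2) / ((1-s) * C n) from (mul_div_assoc _ _ _).symm, mul_div_mul_left _ _ hs0]
  have e2 : Gs Q (s*Q) = ∑' n, g n := by
    rw [Gs]
    apply tsum_congr
    intro n
    have hprod : ∏ j ∈ Finset.range (n+1), (1 - s * Q * Q^j) = C (n+1) := by
      apply Finset.prod_congr rfl
      intro j _
      rw [pow_succ']
      ring_nf
    rw [hprod, hg]
  have hstep : ∀ n, g n - f n = s * (Q^((n+1)*(n+1+1)/2) / C (n+1)) := by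
    intro n
    have hCs : C (n+1) = C n * (1 - s*Q^(n+1)) := Finset.prod_range_succ _ _
    have hQT : Q^((n+1)*(n+1+1)/2) = Q^(n*(n+1)/2) * Q^(n+1) := by
      rw [T_succ, pow_add]
    simp only [hg, hf]
    rw [hQT, hCs]
    field_simp [hCne n, hne' n]
    ring
  have h3 : Gs Q (s*Q) - ∑' n, f n = s * ((∑' n, f n) - 1) := by
    rw [e2, ← Summable.tsum_sub hs_g hs_f]
    calc ∑' n, (g n - f n) = ∑' n, s * (Q^((n+1)*(n+1+1)/2) / C (n+1)) := tsum_congr hstep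
    _ = s * ∑' n, (Q^((n+1)*(n+1+1)/2) / C (n+1)) := tsum_mul_left
    _ = s * ((∑' n, f n) - 1) := by
        congr 1
        have h0 : ∑' n, f n = f 0 + ∑' n, f (n+1) := Summable.tsum_eq_zero_add hs_f
        have hf0 : f 0 = 1 := by simp [hf, hC]
        rw [h0, hf0]
        simp only [hf]
        ring
  linear_combination (1+s) * e1 - h3

end FineAux

namespace FineAux

lemma summable_log_one_sub (x : ℕ → ℂ) (hx : Summable fun n => ‖x n‖) :
    Summable fun n => Complex.log (1 - x n) := by
  have htend : Tendsto (fun n => ‖x n‖) atTop (𝓝 0) := hx.tendsto_atTop_zero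
  have hev : ∀ᶠ n in atTop, ‖Complex.log (1 - x n)‖ ≤ (3/2) * ‖x n‖ := by
    filter_upwards [htend.eventually_le_const (by norm_num : (0:ℝ) < 1/2)] with n hn
    have h : (1:ℂ) - x n = 1 + (-(x n)) := by ring
    rw [h]
    simpa using Complex.norm_log_one_add_half_le_self (z := -(x n)) (by simpa using hn)
  exact Summable.of_norm_bounded_eventually_nat (hx.mul_left (3/2)) hev

lemma summable_log_inv_one_sub (x : ℕ → ℂ) (hx : Summable fun n => ‖x n‖)
    (h : ∀ n, (1:ℂ) - x n ≠ 0) : Summable fun n => Complex.log ((1 - x n)⁻¹) := by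
  have htend : Tendsto (fun n => ‖x n‖) atTop (𝓝 0) := hx.tendsto_atTop_zero
  have hev : ∀ᶠ n in atTop, ‖Complex.log ((1 - x n)⁻¹)‖ ≤ 2 * ‖x n‖ := by
    filter_upwards [htend.eventually_le_const (by norm_num : (0:ℝ) < 1/4)] with n hn
    have h1 : (3/4:ℝ) ≤ ‖(1:ℂ) - x n‖ := by
      have h2 := norm_sub_norm_le (1:ℂ) (x n)
      rw [norm_one] at h2
      linarith
    have hz : ((1:ℂ) - x n)⁻¹ = 1 + x n / (1 - x n) := by
      field_simp [h n]
      ring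
    have hznorm : ‖x n / (1 - x n)‖ ≤ (4/3) * ‖x n‖ := by
      rw [norm_div]
      rw [div_le_iff₀ (by linarith : (0:ℝ) < ‖(1:ℂ) - x n‖)]
      nlinarith [norm_nonneg (x n)]
    have hzsmall : ‖x n / (1 - x n)‖ ≤ 1/2 := by nlinarith
    rw [hz]
    calc ‖Complex.log (1 + x n / (1 - x n))‖ ≤ (3/2) * ‖x n / (1 - x n)‖ :=
          Complex.norm_log_one_add_half_le_self hzsmall
    _ ≤ 2 * ‖x n‖ := by nlinarith
  exact Summable.of_norm_bounded_eventually_nat (hx.mul_left 2) hev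

lemma multipliable_one_sub (x : ℕ → ℂ) (hx : Summable fun n => ‖x n‖)
    (h : ∀ n, (1:ℂ) - x n ≠ 0) : Multipliable fun n => 1 - x n :=
  Complex.multipliable_of_summable_log (summable_log_one_sub x hx)

lemma multipliable_inv_one_sub (x : ℕ → ℂ) (hx : Summable fun n => ‖x n‖)
    (h : ∀ n, (1:ℂ) - x n ≠ 0) : Multipliable fun n => ((1:ℂ) - x n)⁻¹ :=
  Complex.multipliable_of_summable_log (summable_log_inv_one_sub x hx h)

lemma summable_x2 {Q s : ℂ} (hQ : ‖Q‖ < 1) : Summable fun m : ℕ => ‖s^2 * Q^(2*m)‖ := by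
  have h : Summable fun m : ℕ => ‖s^2 * (Q^2)^m‖ := by
    apply summable_geo_norm
    rw [norm_pow]
    nlinarith [norm_nonneg Q]
  apply h.congr
  intro m
  rw [← pow_mul]

lemma Ps_rec {Q s : ℂ} (hQ : ‖Q‖ < 1) (h2 : ∀ m : ℕ, s^2 * Q^(2*m) ≠ 1) :
    Ps Q s = (1 - s^2)⁻¹ * Ps Q (s*Q) := by
  have hne : ∀ m, (1:ℂ) - s^2*Q^(2*m) ≠ 0 := fun m => sub_ne_zero_of_ne (Ne.symm (h2 m))
  have hm : Multipliable fun m : ℕ => ((1:ℂ) - s^2*Q^(2*(m+1)))⁻¹ :=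
    multipliable_inv_one_sub (fun m => s^2*Q^(2*(m+1))) (by
      apply (summable_x2 (s := s*Q) hQ).congr
      intro m
      congr 1
      ring) (fun m => hne (m+1))
  rw [Ps, tprod_eq_zero_mul' (f := fun m : ℕ => ((1:ℂ) - s^2*Q^(2*m))⁻¹) hm]
  congr 1
  · norm_num
  · rw [Ps]
    apply tprod_congr
    intro m
    congr 2
    ring
end FineAux

namespace FineAux

lemma R_den_lb {Q s : ℂ} (hQ : ‖Q‖ < 1) (h2 : ∀ m : ℕ, s^2 * Q^(2*m) ≠ 1) :
    ∃ c > 0, ∀ n, c ≤ ‖∏ j ∈ Finset.range n, (1 - s^2 * Q^2 * Q^(2*j))‖ := by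
  apply exists_prod_lb (fun j => s^2*Q^2*Q^(2*j))
  · apply (summable_x2 (s := s*Q) hQ).congr
    intro m
    congr 1
    ring
  · intro j
    have h' : s^2*Q^2*Q^(2*j) = s^2*Q^(2*(j+1)) := by ring
    rw [h']
    exact sub_ne_zero_of_ne (Ne.symm (h2 (j+1)))

lemma R_summable {Q s : ℂ} (hQ : ‖Q‖ < 1) (h2 : ∀ m : ℕ, s^2 * Q^(2*m) ≠ 1) :
    Summable fun n => Q^n / ∏ j ∈ Finset.range n, (1 - s^2 * Q^2 * Q^(2*j)) := by
  obtain ⟨c, hc, hclb⟩ := R_den_lb hQ h2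
  exact div_summable hQ hc hclb (fun n => le_of_eq (norm_pow Q n))

lemma R_rec {Q s : ℂ} (hQ : ‖Q‖ < 1) (h2 : ∀ m : ℕ, s^2 * Q^(2*m) ≠ 1) :
    Rs Q s = 1 + Q * (1 - s^2*Q^2)⁻¹ * Rs Q (s*Q) := by
  have hne : ∀ m, (1:ℂ) - s^2*Q^(2*m) ≠ 0 := fun m => sub_ne_zero_of_ne (Ne.symm (h2 m))
  have hb : (1:ℂ) - s^2*Q^2 ≠ 0 := by simpa using hne 1
  rw [Rs, Summable.tsum_eq_zero_add (R_summable hQ h2)]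
  congr 1
  · simp
  · rw [Rs, ← tsum_mul_left]
    apply tsum_congr
    intro n
    have hprod : ∏ j ∈ Finset.range (n+1), (1 - s^2*Q^2*Q^(2*j))
        = (1 - s^2*Q^2) * ∏ j ∈ Finset.range n, (1 - (s*Q)^2*Q^2*Q^(2*j)) := by
      rw [Finset.prod_range_succ', mul_comm]
      congr 1
      · norm_num
      · apply Finset.prod_congr rfl
        intro j _
        congr 1
        ring
    rw [hprod]
    have hD : ∏ j ∈ Finset.range n, (1 - (s*Q)^2*Q^2*Q^(2*j)) ≠ 0 := by
      apply Finset.prod_ne_zero_iff.2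
      intro j _
      have h' : (s*Q)^2*Q^2*Q^(2*j) = s^2*Q^(2*(j+2)) := by ring
      rw [h']
      exact hne (j+2)
    field_simp
    ring

lemma F_rec {Q s : ℂ} (hQ : ‖Q‖ < 1) (h2 : ∀ m : ℕ, s^2 * Q^(2*m) ≠ 1) :
    (1 - s^2) * Fs Q s = s + Fs Q (s*Q) := by
  have hne : ∀ m, (1:ℂ) - s^2*Q^(2*m) ≠ 0 := fun m => sub_ne_zero_of_ne (Ne.symm (h2 m))
  have h0 : (1:ℂ) - s^2 ≠ 0 := by simpa using hne 0
  have hb : (1:ℂ) - s^2*Q^2 ≠ 0 := by simpa using hne 1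
  rw [Fs, Fs, Ps_rec hQ h2, R_rec hQ h2]
  have h1 : (1:ℂ) - (s*Q)^2 = 1 - s^2*Q^2 := by ring
  rw [h1]
  field_simp
  ring

end FineAux

namespace FineAux

lemma prod_lb_small {Q a r : ℂ} (hQ : ‖Q‖ < 1) (hr : ‖r‖ ≤ ‖Q‖)
    (ha : ‖a‖ ≤ (1-‖Q‖)/4) (n : ℕ) :
    Real.exp (-2*(1/4:ℝ)) ≤ ‖∏ j ∈ Finset.range n, (1 - a * r^j)‖ := by
  have hQ0 : (0:ℝ) ≤ ‖Q‖ := norm_nonneg Q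
  apply prod_lb_of_small (fun j => a*r^j) (1/4) _ ?_ ?_
  · intro j _
    have h1 : ‖a * r^j‖ ≤ ‖a‖ := by
      rw [norm_mul, norm_pow]
      have h2 : ‖r‖^j ≤ 1 := pow_le_one₀ (norm_nonneg r) (hr.trans hQ.le)
      nlinarith [norm_nonneg a]
    nlinarith
  · have h1 : ∀ j ∈ Finset.range n, ‖a*r^j‖ ≤ ‖a‖*‖Q‖^j := by
      intro j _
      rw [norm_mul, norm_pow]
      exact mul_le_mul_of_nonneg_left (pow_le_pow_left₀ (norm_nonneg r) hr j) (norm_nonneg a)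
    have h2 : (0:ℝ) < 1 - ‖Q‖ := by linarith
    calc ∑ j ∈ Finset.range n, ‖a*r^j‖ ≤ ∑ j ∈ Finset.range n, ‖a‖*‖Q‖^j :=
          Finset.sum_le_sum h1
    _ ≤ ∑' j : ℕ, ‖a‖*‖Q‖^j :=
          Summable.sum_le_tsum _ (fun j _ => by positivity)
            ((summable_geometric_of_lt_one hQ0 hQ).mul_left _)
    _ = ‖a‖ * (1-‖Q‖)⁻¹ := by rw [tsum_mul_left, tsum_geometric_of_lt_one hQ0 hQ]
    _ ≤ ((1-‖Q‖)/4) * (1-‖Q‖)⁻¹ := mul_le_mul_of_nonneg_right ha (by positivity)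
    _ = 1/4 := by
          have h3 : (1:ℝ)-‖Q‖ ≠ 0 := ne_of_gt h2
          field_simp

lemma tendsto_sQ {Q t : ℂ} (hQ : ‖Q‖ < 1) :
    Tendsto (fun N : ℕ => t*Q^N) atTop (𝓝 0) := by
  have h := tendsto_pow_atTop_nhds_zero_of_norm_lt_one hQ
  simpa using h.const_mul t

lemma G_lim {Q t : ℂ} (hQ : ‖Q‖ < 1) :
    Tendsto (fun N => Gs Q (t*Q^N)) atTop (𝓝 (psi Q)) := by
  have hQ1 : (0:ℝ) < 1 - ‖Q‖ := by linarith
  have hs0 : Tendsto (fun N : ℕ => t*Q^N) atTop (𝓝 0) := tendsto_sQ hQ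
  have h := tendsto_tsum_of_dominated_convergence (𝓕 := atTop)
      (f := fun (N : ℕ) (n : ℕ) =>
        Q^(n*(n+1)/2) / ∏ j ∈ Finset.range (n+1), (1 - (t*Q^N) * Q^j))
      (g := fun n => Q^(n*(n+1)/2))
      (bound := fun n => ‖Q‖^n * (Real.exp (-2*(1/4:ℝ)))⁻¹)
      (((summable_geometric_of_lt_one (norm_nonneg Q) hQ)).mul_right _) ?_ ?_
  · exact h
  · intro n
    have hden : Tendsto (fun N => ∏ j ∈ Finset.range (n+1), (1 - (t*Q^N)*Q^j)) atTop
        (𝓝 1) := by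
      have hfac : ∀ j ∈ Finset.range (n+1),
          Tendsto (fun N => 1 - (t*Q^N)*Q^j) atTop (𝓝 1) := by
        intro j _
        have := (hs0.mul_const (Q^j)).const_sub 1
        simpa using this
      have := tendsto_finset_prod (Finset.range (n+1)) hfac
      simpa using this
    have := Tendsto.div (tendsto_const_nhds (x := Q^(n*(n+1)/2))) hden one_ne_zero
    rwa [div_one] at this
  · have hev : ∀ᶠ N : ℕ in atTop, ‖t*Q^N‖ ≤ (1-‖Q‖)/4 := by
      have := hs0.norm
      rw [norm_zero] at this
      exact this.eventually_le_const (by positivity)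
    filter_upwards [hev] with N hN n
    rw [norm_div]
    calc ‖Q^(n*(n+1)/2)‖ / ‖∏ j ∈ Finset.range (n+1), (1 - (t*Q^N)*Q^j)‖
        ≤ ‖Q‖^n / Real.exp (-2*(1/4:ℝ)) := by
          apply div_le_div₀ (pow_nonneg (norm_nonneg Q) n) (norm_QT_le hQ n)
            (Real.exp_pos _) (prod_lb_small hQ le_rfl hN (n+1))
    _ = ‖Q‖^n * (Real.exp (-2*(1/4:ℝ)))⁻¹ := div_eq_mul_inv _ _

lemma R_bound {Q s : ℂ} (hQ : ‖Q‖ < 1) (hs : ‖s^2*Q^2‖ ≤ (1-‖Q‖)/4) :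
    ‖Rs Q s‖ ≤ (Real.exp (-2*(1/4:ℝ)))⁻¹ * (1-‖Q‖)⁻¹ := by
  have hQ2 : ‖Q^2‖ ≤ ‖Q‖ := by
    rw [norm_pow]
    nlinarith [norm_nonneg Q]
  have hden : ∀ n, Real.exp (-2*(1/4:ℝ)) ≤
      ‖∏ j ∈ Finset.range n, (1 - s^2*Q^2*Q^(2*j))‖ := by
    intro n
    have h := prod_lb_small (a := s^2*Q^2) (r := Q^2) hQ hQ2 hs n
    have hcg : ∀ j, (1:ℂ) - s^2*Q^2*(Q^2)^j = 1 - s^2*Q^2*Q^(2*j) := by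
      intro j; congr 1; rw [← pow_mul]
    simpa only [hcg] using h
  have hnb : ∀ n : ℕ, ‖Q^n / ∏ j ∈ Finset.range n, (1 - s^2*Q^2*Q^(2*j))‖
      ≤ (Real.exp (-2*(1/4:ℝ)))⁻¹ * ‖Q‖^n := by
    intro n
    rw [norm_div]
    calc ‖Q^n‖ / ‖∏ j ∈ Finset.range n, (1 - s^2*Q^2*Q^(2*j))‖
        ≤ ‖Q‖^n / Real.exp (-2*(1/4:ℝ)) :=
          div_le_div₀ (pow_nonneg (norm_nonneg Q) n) (le_of_eq (norm_pow Q n))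
            (Real.exp_pos _) (hden n)
    _ = (Real.exp (-2*(1/4:ℝ)))⁻¹ * ‖Q‖^n := by rw [div_eq_mul_inv, mul_comm]
  have hsum : Summable fun n : ℕ =>
      ‖Q^n / ∏ j ∈ Finset.range n, (1 - s^2*Q^2*Q^(2*j))‖ := by
    apply Summable.of_nonneg_of_le (fun n => norm_nonneg _) hnb
    exact (summable_geometric_of_lt_one (norm_nonneg Q) hQ).mul_left _
  rw [Rs]
  calc ‖∑' n : ℕ, Q^n / ∏ j ∈ Finset.range n, (1 - s^2*Q^2*Q^(2*j))‖
      ≤ ∑' n : ℕ, ‖Q^n / ∏ j ∈ Finset.range n, (1 - s^2*Q^2*Q^(2*j))‖ :=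
        norm_tsum_le_tsum_norm hsum
  _ ≤ ∑' n : ℕ, (Real.exp (-2*(1/4:ℝ)))⁻¹ * ‖Q‖^n := by
        apply Summable.tsum_le_tsum hnb hsum
        exact (summable_geometric_of_lt_one (norm_nonneg Q) hQ).mul_left _
  _ = (Real.exp (-2*(1/4:ℝ)))⁻¹ * (1-‖Q‖)⁻¹ := by
        rw [tsum_mul_left, tsum_geometric_of_lt_one (norm_nonneg Q) hQ]

end FineAux

namespace FineAux

lemma h1_shift {Q t : ℂ} (h1 : ∀ j : ℕ, t * Q^j ≠ 1) (N : ℕ) :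
    ∀ j : ℕ, (t*Q^N) * Q^j ≠ 1 := by
  intro j
  have h : (t*Q^N)*Q^j = t*Q^(N+j) := by rw [pow_add]; ring
  rw [h]; exact h1 (N+j)

lemma h2_shift {Q t : ℂ} (h2 : ∀ m : ℕ, t^2 * Q^(2*m) ≠ 1) (N : ℕ) :
    ∀ m : ℕ, (t*Q^N)^2 * Q^(2*m) ≠ 1 := by
  intro m
  have h : (t*Q^N)^2*Q^(2*m) = t^2*Q^(2*(N+m)) := by
    rw [mul_pow, ← pow_mul, mul_assoc, ← pow_add]
    have he : N*2+2*m = 2*(N+m) := by ring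
    rw [he]
  rw [h]; exact h2 (N+m)

lemma D_iter {Q t : ℂ} (hQ : ‖Q‖ < 1) (h1 : ∀ j : ℕ, t * Q^j ≠ 1)
    (h2 : ∀ m : ℕ, t^2 * Q^(2*m) ≠ 1) (N : ℕ) :
    Gs Q (t*Q^N) - Fs Q (t*Q^N) =
      (Gs Q t - Fs Q t) * ∏ k ∈ Finset.range N, (1 - t^2*Q^(2*k)) := by
  induction N with
  | zero => simp
  | succ N ih =>
    have hG := G_rec hQ (h1_shift h1 N)
    have hF := F_rec hQ (h2_shift h2 N)
    have hD : Gs Q ((t*Q^N)*Q) - Fs Q ((t*Q^N)*Q) =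
        (1 - (t*Q^N)^2) * (Gs Q (t*Q^N) - Fs Q (t*Q^N)) := by
      linear_combination hF - hG
    have hs : (t*Q^N)*Q = t*Q^(N+1) := by rw [pow_succ]; ring
    have hsq : (1:ℂ) - (t*Q^N)^2 = 1 - t^2*Q^(2*N) := by ring
    rw [hs, hsq] at hD
    rw [hD, ih, Finset.prod_range_succ]
    ring

lemma Ps_iter {Q t : ℂ} (hQ : ‖Q‖ < 1) (h2 : ∀ m : ℕ, t^2 * Q^(2*m) ≠ 1) (N : ℕ) :
    Ps Q (t*Q^N) = Ps Q t * ∏ k ∈ Finset.range N, (1 - t^2*Q^(2*k)) := by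
  induction N with
  | zero => simp
  | succ N ih =>
    have h := Ps_rec hQ (h2_shift h2 N)
    have hs2 : (1:ℂ) - (t*Q^N)^2 ≠ 0 := by
      apply sub_ne_zero_of_ne
      apply Ne.symm
      simpa using h2_shift h2 N 0
    have h' : Ps Q ((t*Q^N)*Q) = (1 - (t*Q^N)^2) * Ps Q (t*Q^N) := by
      rw [h]
      rw [← mul_assoc, mul_inv_cancel₀ hs2, one_mul]
    have hs : (t*Q^N)*Q = t*Q^(N+1) := by rw [pow_succ]; ring
    have hsq : (1:ℂ) - (t*Q^N)^2 = 1 - t^2*Q^(2*N) := by ring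
    rw [hs, hsq] at h'
    rw [h', ih, Finset.prod_range_succ]
    ring

lemma F_lim {Q t : ℂ} (hQ : ‖Q‖ < 1) (h2 : ∀ m : ℕ, t^2 * Q^(2*m) ≠ 1) :
    Tendsto (fun N => Fs Q (t*Q^N)) atTop (𝓝 (psi Q)) := by
  have hQ1 : (0:ℝ) < 1 - ‖Q‖ := by linarith
  have hne2 : ∀ m, (1:ℂ) - t^2*Q^(2*m) ≠ 0 := fun m => sub_ne_zero_of_ne (Ne.symm (h2 m))
  have hs0 : Tendsto (fun N : ℕ => t*Q^N) atTop (𝓝 0) := tendsto_sQ hQ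
  have hmulneg : Multipliable (fun m => (1:ℂ) - t^2*Q^(2*m)) :=
    multipliable_one_sub _ (summable_x2 hQ) hne2
  have hmulinv : Multipliable (fun m => ((1:ℂ) - t^2*Q^(2*m))⁻¹) :=
    multipliable_inv_one_sub _ (summable_x2 hQ) hne2
  have hPL : Ps Q t * (∏' m : ℕ, (1 - t^2*Q^(2*m))) = 1 := by
    rw [Ps, ← Multipliable.tprod_mul hmulinv hmulneg]
    have hcg : ∀ m : ℕ, ((1:ℂ) - t^2*Q^(2*m))⁻¹ * (1 - t^2*Q^(2*m)) = 1 :=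
      fun m => inv_mul_cancel₀ (hne2 m)
    rw [tprod_congr hcg]
    exact tprod_one
  have hPN : Tendsto (fun N => ∏ k ∈ Finset.range N, ((1:ℂ) - t^2*Q^(2*k))) atTop
      (𝓝 (∏' m : ℕ, (1 - t^2*Q^(2*m)))) := hmulneg.hasProd.tendsto_prod_nat
  have hterm1 : Tendsto (fun N => psi Q * Ps Q (t*Q^N)) atTop (𝓝 (psi Q)) := by
    have heq : ∀ N, psi Q * Ps Q (t*Q^N) =
        psi Q * Ps Q t * ∏ k ∈ Finset.range N, (1 - t^2*Q^(2*k)) := by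
      intro N
      rw [Ps_iter hQ h2 N]
      ring
    simp only [heq]
    have h := (tendsto_const_nhds (x := psi Q * Ps Q t)).mul hPN
    have hval : psi Q * Ps Q t * (∏' m : ℕ, (1 - t^2*Q^(2*m))) = psi Q := by
      rw [mul_assoc, hPL, mul_one]
    rwa [hval] at h
  have hterm2 : Tendsto (fun N => (t*Q^N)/(1-(t*Q^N)^2) * Rs Q (t*Q^N)) atTop (𝓝 0) := by
    have hden : Tendsto (fun N => 1-(t*Q^N)^2) atTop (𝓝 1) := by
      have := (hs0.pow 2).const_sub 1
      simpa using this
    have hA : Tendsto (fun N => (t*Q^N)/(1-(t*Q^N)^2)) atTop (𝓝 0) := by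
      have := hs0.div hden one_ne_zero
      rwa [zero_div] at this
    have hB : IsBoundedUnder (· ≤ ·) atTop ((‖·‖) ∘ (fun N => Rs Q (t*Q^N))) := by
      apply isBoundedUnder_of_eventually_le
        (a := (Real.exp (-2*(1/4:ℝ)))⁻¹ * (1-‖Q‖)⁻¹)
      have hx : Tendsto (fun N => ‖(t*Q^N)^2*Q^2‖) atTop (𝓝 0) := by
        have := ((hs0.pow 2).mul_const (Q^2)).norm
        simpa using this
      filter_upwards [hx.eventually_le_const (show (0:ℝ) < (1-‖Q‖)/4 by linarith)] with N hN
      exact R_bound hQ hN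
    exact hA.zero_mul_isBoundedUnder_le hB
  have h := hterm1.add hterm2
  rw [add_zero] at h
  apply h.congr
  intro N
  rw [Fs]

lemma key {Q t : ℂ} (hQ : ‖Q‖ < 1) (h1 : ∀ j : ℕ, t * Q^j ≠ 1)
    (h2 : ∀ m : ℕ, t^2 * Q^(2*m) ≠ 1) : Gs Q t = Fs Q t := by
  have hne2 : ∀ m, (1:ℂ) - t^2*Q^(2*m) ≠ 0 := fun m => sub_ne_zero_of_ne (Ne.symm (h2 m))
  obtain ⟨c, hc, hclb⟩ := exists_prod_lb (fun k => t^2*Q^(2*k)) (summable_x2 hQ) hne2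
  have hlim : Tendsto (fun N => Gs Q (t*Q^N) - Fs Q (t*Q^N)) atTop (𝓝 0) := by
    have := (G_lim (t := t) hQ).sub (F_lim hQ h2)
    simpa using this
  have hlb : ∀ N : ℕ, ‖Gs Q t - Fs Q t‖ * c ≤ ‖Gs Q (t*Q^N) - Fs Q (t*Q^N)‖ := by
    intro N
    rw [D_iter hQ h1 h2 N, norm_mul]
    exact mul_le_mul_of_nonneg_left (hclb N) (norm_nonneg _)
  have h0 : ‖Gs Q t - Fs Q t‖ * c ≤ 0 := by
    have hnorm : Tendsto (fun N => ‖Gs Q (t*Q^N) - Fs Q (t*Q^N)‖) atTop (𝓝 0) := by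
      have := hlim.norm
      simpa using this
    exact ge_of_tendsto' hnorm hlb
  have : ‖Gs Q t - Fs Q t‖ = 0 := by
    nlinarith [norm_nonneg (Gs Q t - Fs Q t)]
  have heq : Gs Q t - Fs Q t = 0 := norm_eq_zero.1 this
  exact sub_eq_zero.1 heq

end FineAux

open FineAux in
theorem fine_transformation (q b : ℂ) (hq : ‖q‖ < 1) (hb : b ≠ 0)
    (hden1 : ∀ j : ℕ, b⁻¹ * q ^ (2 * j + 2) ≠ 1)
    (hden2 : ∀ m : ℕ, b⁻¹ ^ 2 * q ^ (4 * m + 4) ≠ 1) :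
    ∑' n : ℕ, q ^ (n ^ 2 + n) /
        ∏ j ∈ Finset.range (n + 1), (1 - b⁻¹ * q ^ 2 * q ^ (2 * j)) =
      (∑' l : ℕ, q ^ (l ^ 2 + l)) * ∏' m : ℕ, (1 - b⁻¹ ^ 2 * q ^ (4 * m + 4))⁻¹ +
        (b⁻¹ * q ^ 2 / (1 - b⁻¹ ^ 2 * q ^ 4)) *
          ∑' n : ℕ, q ^ (2 * n) /
            ∏ j ∈ Finset.range n, (1 - b⁻¹ ^ 2 * q ^ 8 * q ^ (4 * j)) := by
  have hQ : ‖q^2‖ < 1 := by rw [norm_pow]; nlinarith [norm_nonneg q]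
  have h1 : ∀ j : ℕ, (b⁻¹*q^2) * (q^2)^j ≠ 1 := by
    intro j
    have he : (b⁻¹*q^2) * (q^2)^j = b⁻¹ * q^(2*j+2) := by ring
    rw [he]; exact hden1 j
  have h2 : ∀ m : ℕ, (b⁻¹*q^2)^2 * (q^2)^(2*m) ≠ 1 := by
    intro m
    have he : (b⁻¹*q^2)^2 * (q^2)^(2*m) = b⁻¹^2 * q^(4*m+4) := by ring
    rw [he]; exact hden2 m
  have hkey := key hQ h1 h2
  have hexp : ∀ n : ℕ, q ^ (n^2+n) = (q^2) ^ (n*(n+1)/2) := by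
    intro n
    rw [← pow_mul]
    congr 1
    have he : Even (n*(n+1)) := Nat.even_mul_succ_self n
    have h := Nat.mul_div_cancel' he.two_dvd
    rw [h]
    ring
  have hL : (∑' n : ℕ, q ^ (n ^ 2 + n) /
      ∏ j ∈ Finset.range (n + 1), (1 - b⁻¹ * q ^ 2 * q ^ (2 * j))) = Gs (q^2) (b⁻¹*q^2) := by
    rw [Gs]
    apply tsum_congr
    intro n
    congr 1
    · exact hexp n
    · apply Finset.prod_congr rfl
      intro j _
      congr 1
      ring
  have hpsi : (∑' l : ℕ, q ^ (l^2+l)) = psi (q^2) := by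
    rw [psi]
    exact tsum_congr hexp
  have hPs : (∏' m : ℕ, (1 - b⁻¹ ^ 2 * q ^ (4 * m + 4))⁻¹) = Ps (q^2) (b⁻¹*q^2) := by
    rw [Ps]
    apply tprod_congr
    intro m
    have he : b⁻¹^2*q^(4*m+4) = (b⁻¹*q^2)^2*(q^2)^(2*m) := by ring
    rw [he]
  have hRs : (∑' n : ℕ, q ^ (2 * n) /
      ∏ j ∈ Finset.range n, (1 - b⁻¹ ^ 2 * q ^ 8 * q ^ (4 * j))) = Rs (q^2) (b⁻¹*q^2) := by
    rw [Rs]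
    apply tsum_congr
    intro n
    congr 1
    · rw [← pow_mul]
    · apply Finset.prod_congr rfl
      intro j _
      congr 1
      ring
  have hco : b⁻¹ * q ^ 2 / (1 - b⁻¹ ^ 2 * q ^ 4) = (b⁻¹*q^2)/(1 - (b⁻¹*q^2)^2) := by
    congr 1
    ring
  rw [hL, hkey, Fs, ← hpsi, ← hPs, ← hRs, ← hco]
end
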